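/- arXiv:2208.14391 — 4 statements merged into one kernel-verified Lean document; each statement's English description precedes it below -/
import Mathlib

section
/- Let f(x) = x·log(x). If μ_i ∈ 𝒫^{n_i}(X_i) for i = 2,…,N (no assumption on μ₁), then every coupling π ∈ Π(μ₁,…,μ_N) satisfies D_f(π, P) ≤ Σ_{i=2}^N log(n_i), where P = μ₁⊗⋯⊗μ_N. -/
open MeasureTheory ENNReal Filter

noncomputable section

/-- The set of couplings of two marginals. -/
def couplings2 {Y Z : Type*} [MeasurableSpace Y] [MeasurableSpace Z]
    (μ : Measure Y) (ν : Measure Z) : Set (Measure (Y × Z)) :=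
  {κ | IsProbabilityMeasure κ ∧ κ.map Prod.fst = μ ∧ κ.map Prod.snd = ν}

/-- The set of couplings of `N` marginals. -/
def couplings {N : ℕ} {X : Fin N → Type*} [∀ i, MeasurableSpace (X i)]
    (μ : ∀ i, Measure (X i)) : Set (Measure (∀ i, X i)) :=
  {π | IsProbabilityMeasure π ∧ ∀ i, π.map (fun x => x i) = μ i}

/-- `p`-Wasserstein distance with respect to an abstract distance function `D`. -/
def Wass {Z : Type*} [MeasurableSpace Z] (D : Z → Z → ℝ) (p : ℝ)
    (μ ν : Measure Z) : ℝ≥0∞ :=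
  ⨅ κ ∈ couplings2 μ ν, (∫⁻ z, ENNReal.ofReal (D z.1 z.2 ^ p) ∂κ) ^ (1 / p)

/-- The product metric `d_{X,p}`. -/
def dXp {N : ℕ} {X : Fin N → Type*} [∀ i, PseudoMetricSpace (X i)] (p : ℝ)
    (x y : ∀ i, X i) : ℝ :=
  (∑ i, dist (x i) (y i) ^ p) ^ (1 / p)

/-- Finite `p`-th moment. -/
def HasMomentp {Y : Type*} [MeasurableSpace Y] [PseudoMetricSpace Y]
    (p : ℝ) (μ : Measure Y) : Prop :=
  ∃ x₀ : Y, ∫⁻ x, ENNReal.ofReal (dist x x₀ ^ p) ∂μ < ⊤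

/-- f-divergence `D_f(μ, ν)`, valued in the extended reals. -/
def fDiv {Z : Type*} [MeasurableSpace Z] (f : ℝ → ℝ) (μ ν : Measure Z) : EReal :=
  haveI := Classical.propDecidable
  if μ ≪ ν ∧ Integrable (fun z => f (μ.rnDeriv ν z).toReal) ν
  then ((∫ z, f (μ.rnDeriv ν z).toReal ∂ν : ℝ) : EReal)
  else ⊤

/-- `μ` is supported on at most `n` points. -/
def FinitelySupported {Y : Type*} [MeasurableSpace Y] (n : ℕ) (μ : Measure Y) : Prop :=
  ∃ s : Finset Y, μ (↑s : Set Y)ᶜ = 0 ∧ s.card ≤ n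

/-- `μ` is a uniform measure on `n` points. -/
def UniformOn {Y : Type*} [MeasurableSpace Y] (n : ℕ) (μ : Measure Y) : Prop :=
  ∃ y : Fin n → Y, μ = (n : ℝ≥0∞)⁻¹ • ∑ j, Measure.dirac (y j)

/-- The quantization property `quant_p(C, α)` with respect to a distance `D`. -/
def QuantD {Z : Type*} [MeasurableSpace Z] (D : Z → Z → ℝ) (p C α : ℝ)
    (μ : Measure Z) : Prop :=
  ∀ n : ℕ, 1 ≤ n → ∃ μn : Measure Z, IsProbabilityMeasure μn ∧ FinitelySupported n μn ∧
    Wass D p μn μ ≤ ENNReal.ofReal (C * (n : ℝ) ^ (-α))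

/-- The empirical quantization property `quant_p^{em}(C, α)`. -/
def QuantEm {Y : Type*} [MeasurableSpace Y] [PseudoMetricSpace Y] (p C α : ℝ)
    (μ : Measure Y) : Prop :=
  ∀ n : ℕ, 1 ≤ n → ∃ μn : Measure Y, UniformOn n μn ∧
    Wass dist p μn μ ≤ ENNReal.ofReal (C * (n : ℝ) ^ (-α))

/-- The unregularized optimal transport value (N marginals). -/
def OTcost {N : ℕ} {X : Fin N → Type*} [∀ i, MeasurableSpace (X i)]
    (μ : ∀ i, Measure (X i)) (c : (∀ i, X i) → ℝ) : ℝ :=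
  sInf ((fun π : Measure (∀ i, X i) => ∫ x, c x ∂π) '' couplings μ)

/-- The `D_f`-regularized optimal transport value (N marginals). -/
def OTf {N : ℕ} {X : Fin N → Type*} [∀ i, MeasurableSpace (X i)]
    (μ : ∀ i, Measure (X i)) (c : (∀ i, X i) → ℝ) (f : ℝ → ℝ) (ε : ℝ) : EReal :=
  sInf ((fun π : Measure (∀ i, X i) =>
    ((∫ x, c x ∂π : ℝ) : EReal) + (ε : EReal) * fDiv f π (Measure.pi μ)) '' couplings μ)

/-- The unregularized optimal transport value (two marginals). -/
def OTcost2 {Y Z : Type*} [MeasurableSpace Y] [MeasurableSpace Z]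
    (μ : Measure Y) (ν : Measure Z) (c : Y × Z → ℝ) : ℝ :=
  sInf ((fun π : Measure (Y × Z) => ∫ z, c z ∂π) '' couplings2 μ ν)

/-- The `D_f`-regularized optimal transport value (two marginals). -/
def OTf2 {Y Z : Type*} [MeasurableSpace Y] [MeasurableSpace Z]
    (μ : Measure Y) (ν : Measure Z) (c : Y × Z → ℝ) (f : ℝ → ℝ) (ε : ℝ) : EReal :=
  sInf ((fun π : Measure (Y × Z) =>
    ((∫ z, c z ∂π : ℝ) : EReal) + (ε : EReal) * fDiv f π (μ.prod ν)) '' couplings2 μ ν)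

/-- Condition `(A_{L,C})`: the integrated transport cost is Lipschitz in the coupling. -/
def CondA {N : ℕ} {X : Fin N → Type*} [∀ i, MeasurableSpace (X i)]
    [∀ i, PseudoMetricSpace (X i)]
    (p L C : ℝ) (μ : ∀ i, Measure (X i)) (c : (∀ i, X i) → ℝ) : Prop :=
  ∀ μ' : ∀ i, Measure (X i),
    (∀ i, IsProbabilityMeasure (μ' i) ∧ HasMomentp p (μ' i) ∧
      Wass dist p (μ' i) (μ i) ≤ ENNReal.ofReal C) →
    ∀ π ∈ couplings μ, ∀ π' ∈ couplings μ',
      ENNReal.ofReal |∫ x, c x ∂π - ∫ x, c x ∂π'| ≤ ENNReal.ofReal L * Wass (dXp p) p π π'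


lemma abs_mul_log_le_one_add_sq {x : ℝ} (hx : 0 ≤ x) : |x * Real.log x| ≤ 1 + x ^ 2 := by
  rcases eq_or_lt_of_le hx with h | hx0
  · simp [← h]
  rcases le_or_gt x 1 with h1 | h1
  · have hlog : Real.log x ≤ 0 := Real.log_nonpos hx h1
    have habs : |x * Real.log x| = x * -Real.log x := by
      rw [abs_of_nonpos (mul_nonpos_of_nonneg_of_nonpos hx hlog)]; ring
    have h2 : -Real.log x = Real.log x⁻¹ := (Real.log_inv x).symm
    have h3 : Real.log x⁻¹ ≤ x⁻¹ - 1 := Real.log_le_sub_one_of_pos (by positivity)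
    have h4 : x * -Real.log x ≤ x * (x⁻¹ - 1) := by
      rw [h2]; exact mul_le_mul_of_nonneg_left h3 hx
    have hx1 : x * (x⁻¹ - 1) = 1 - x := by field_simp
    nlinarith
  · have hlog : 0 ≤ Real.log x := Real.log_nonneg h1.le
    have habs : |x * Real.log x| = x * Real.log x :=
      abs_of_nonneg (mul_nonneg hx hlog)
    have h3 : Real.log x ≤ x - 1 := Real.log_le_sub_one_of_pos hx0
    nlinarith

lemma entropy_sum_le {α : Type*} (t : Finset α) (p : α → ℝ)
    (hpos : ∀ a ∈ t, 0 < p a) (hsum : ∑ a ∈ t, p a = 1)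
    {n : ℕ} (hn : t.card ≤ n) :
    ∑ a ∈ t, p a * (-Real.log (p a)) ≤ Real.log n := by
  have htne : t.Nonempty := by
    by_contra h
    rw [Finset.not_nonempty_iff_eq_empty] at h
    simp [h] at hsum
  have hk : 0 < (t.card : ℝ) := by
    exact_mod_cast Finset.card_pos.mpr htne
  have key : ∀ a ∈ t, p a * (-Real.log (p a)) ≤
      p a * Real.log t.card + ((t.card : ℝ)⁻¹ - p a) := by
    intro a ha
    have hpa := hpos a ha
    have h1 : -Real.log (p a) = Real.log t.card + Real.log ((t.card : ℝ)⁻¹ * (p a)⁻¹) := by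
      rw [Real.log_mul (by positivity) (by positivity), Real.log_inv, Real.log_inv]; ring
    rw [h1, mul_add]
    have h2 : Real.log ((t.card : ℝ)⁻¹ * (p a)⁻¹) ≤ (t.card : ℝ)⁻¹ * (p a)⁻¹ - 1 :=
      Real.log_le_sub_one_of_pos (by positivity)
    have h3 : p a * Real.log ((t.card : ℝ)⁻¹ * (p a)⁻¹) ≤
        p a * ((t.card : ℝ)⁻¹ * (p a)⁻¹ - 1) := mul_le_mul_of_nonneg_left h2 hpa.le
    have h4 : p a * ((t.card : ℝ)⁻¹ * (p a)⁻¹ - 1) = (t.card : ℝ)⁻¹ - p a := by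
      field_simp
    linarith
  calc ∑ a ∈ t, p a * (-Real.log (p a))
      ≤ ∑ a ∈ t, (p a * Real.log t.card + ((t.card : ℝ)⁻¹ - p a)) := Finset.sum_le_sum key
    _ = Real.log t.card := by
        rw [Finset.sum_add_distrib, ← Finset.sum_mul, hsum, Finset.sum_sub_distrib,
          Finset.sum_const, hsum]
        field_simp
        rw [nsmul_eq_mul, mul_one_div_cancel hk.ne', sub_self, add_zero]
    _ ≤ Real.log n := Real.log_le_log hk (by exact_mod_cast hn)

/-- Lemma 2.4 (iii) (Divergence bounds, entropic case): for `f x = x log x`, if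
`μ i` is supported on at most `n i` points for every `i ≠ 0` (no assumption on `μ 0`),
then every coupling `π` of `(μ i)` satisfies `D_f(π, P) ≤ ∑_{i ≠ 0} log (n i)`,
where `P` is the product of the marginals. -/
theorem divergence_bound_entropic_multimarginal
    {N : ℕ} [NeZero N] {X : Fin N → Type*}
    [∀ i, MetricSpace (X i)] [∀ i, PolishSpace (X i)]
    [∀ i, MeasurableSpace (X i)] [∀ i, BorelSpace (X i)]
    (μ : ∀ i, Measure (X i)) [∀ i, IsProbabilityMeasure (μ i)]
    (n : Fin N → ℕ)
    (hsupp : ∀ i : Fin N, i ≠ 0 → FinitelySupported (n i) (μ i))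
    (π : Measure (∀ i, X i)) (hπ : π ∈ couplings μ) :
    fDiv (fun x => x * Real.log x) π (Measure.pi μ) ≤
      ((∑ i ∈ Finset.univ.erase (0 : Fin N), Real.log (n i) : ℝ) : EReal) := by
  classical
  obtain ⟨hπprob, hmarg⟩ := hπ
  haveI := hπprob
  set P : Measure (∀ i, X i) := Measure.pi μ with hPdef
  haveI hPprob : IsProbabilityMeasure P := by rw [hPdef]; infer_instance
  -- the underlying space is nonempty
  have hne : Nonempty (∀ i, X i) := by
    by_contra h
    rw [not_nonempty_iff] at h
    have h1 : (Set.univ : Set (∀ i, X i)) = ∅ := Set.univ_eq_empty_iff.mpr h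
    have h2 := hπprob.measure_univ
    rw [h1, measure_empty] at h2
    exact zero_ne_one h2
  obtain ⟨x₀⟩ := hne
  set E : Finset (Fin N) := Finset.univ.erase 0 with hEdef
  -- support finsets
  choose s0 hs0 using hsupp
  set t : ∀ i, Finset (X i) :=
    fun i => if h : i = 0 then ∅ else (s0 i h).filter (fun a => μ i {a} ≠ 0) with htdef
  have ht_eq : ∀ (i : Fin N) (hi : i ≠ 0),
      t i = (s0 i hi).filter (fun a => μ i {a} ≠ 0) := by
    intro i hi
    simp only [htdef]
    rw [dif_neg hi]
  have ht_ne : ∀ (i : Fin N), i ≠ 0 → ∀ a ∈ t i, μ i {a} ≠ 0 := by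
    intro i hi a ha
    rw [ht_eq i hi, Finset.mem_filter] at ha
    exact ha.2
  have ht_card : ∀ (i : Fin N) (_ : i ≠ 0), (t i).card ≤ n i := by
    intro i hi
    rw [ht_eq i hi]
    exact (Finset.card_filter_le _ _).trans (hs0 i hi).2
  have ht_compl : ∀ (i : Fin N), i ≠ 0 → μ i ((↑(t i) : Set (X i))ᶜ) = 0 := by
    intro i hi
    have hsub : ((↑(t i) : Set (X i))ᶜ) ⊆
        ((↑(s0 i hi) : Set (X i))ᶜ) ∪ ↑((s0 i hi).filter (fun a => μ i {a} = 0)) := by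
      intro a ha
      by_cases h1 : a ∈ s0 i hi
      · right
        simp only [Finset.coe_filter, Set.mem_setOf_eq]
        refine ⟨h1, ?_⟩
        by_contra h2
        apply ha
        rw [ht_eq i hi]
        simp only [Finset.coe_filter, Set.mem_setOf_eq]
        exact ⟨h1, h2⟩
      · left; simpa using h1
    refine measure_mono_null hsub (measure_union_null (hs0 i hi).1 ?_)
    set F := (s0 i hi).filter (fun a => μ i {a} = 0) with hFdef
    have hleF : μ i ↑F ≤ ∑ a ∈ F, μ i {a} := by
      rw [show (↑F : Set (X i)) = ⋃ a ∈ F, {a} by ext y; simp]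
      exact measure_biUnion_finset_le F _
    have hzero : ∑ a ∈ F, μ i {a} = 0 := by
      apply Finset.sum_eq_zero
      intro a ha
      rw [hFdef, Finset.mem_filter] at ha
      exact ha.2
    rw [hzero] at hleF
    exact le_antisymm hleF (zero_le)
  -- pattern finset
  set K : Finset (∀ i, X i) :=
    Fintype.piFinset (fun i => if i = 0 then {x₀ i} else t i) with hKdef
  have hKmem : ∀ p ∈ K, p 0 = x₀ 0 ∧ ∀ i ∈ E, p i ∈ t i := by
    intro p hp
    rw [hKdef, Fintype.mem_piFinset] at hp
    constructor
    · have h0 := hp 0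
      rwa [if_pos rfl, Finset.mem_singleton] at h0
    · intro i hi
      have hi0 : i ≠ 0 := Finset.ne_of_mem_erase hi
      have h1 := hp i
      rwa [if_neg hi0] at h1
  -- slices
  set Sl : (∀ i, X i) → Set (∀ i, X i) := fun p => {x | ∀ i ∈ E, x i = p i} with hSldef
  have hSlmeas : ∀ p, MeasurableSet (Sl p) := by
    intro p
    have h1 : Sl p = ⋂ i ∈ E, (fun x : ∀ j, X j => x i) ⁻¹' {p i} := by
      ext x; simp [hSldef]
    rw [h1]
    exact E.measurableSet_biInter
      (fun i _ => measurable_pi_apply i (measurableSet_singleton (p i)))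
  have hdisj : ∀ p ∈ K, ∀ q ∈ K, p ≠ q → ∀ x, x ∈ Sl p → x ∈ Sl q → False := by
    intro p hp q hq hpq x hxp hxq
    apply hpq
    funext i
    by_cases hi : i = 0
    · subst hi
      rw [(hKmem p hp).1, (hKmem q hq).1]
    · have hiE : i ∈ E := Finset.mem_erase.mpr ⟨hi, Finset.mem_univ i⟩
      rw [← hxp i hiE, hxq i hiE]
  -- density bound function
  set cp : (∀ i, X i) → ℝ≥0∞ := fun p => ∏ i ∈ E, (μ i {p i})⁻¹ with hcpdef
  have hcp_ne_top : ∀ p ∈ K, cp p ≠ ∞ := by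
    intro p hp
    simp only [hcpdef]
    refine (ENNReal.prod_lt_top ?_).ne
    intro i hi
    exact (ENNReal.inv_ne_top.mpr
      (ht_ne i (Finset.ne_of_mem_erase hi) _ ((hKmem p hp).2 i hi))).lt_top
  set c' : (∀ i, X i) → ℝ≥0∞ :=
    fun x => ∑ p ∈ K, (Sl p).indicator (fun _ => cp p) x with hc'def
  have hc'meas : Measurable c' := by
    apply Finset.measurable_sum
    intro p _
    exact measurable_const.indicator (hSlmeas p)
  -- good set
  set G : Set (∀ i, X i) := {x | ∀ i ∈ E, x i ∈ (↑(t i) : Set (X i))} with hGdef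
  have hGc : π Gᶜ = 0 := by
    have hsub : Gᶜ ⊆ ⋃ i ∈ E, (fun x : ∀ j, X j => x i) ⁻¹' ((↑(t i) : Set (X i))ᶜ) := by
      intro x hx
      simp only [hGdef, Set.mem_compl_iff, Set.mem_setOf_eq, not_forall] at hx
      obtain ⟨i, hi, hxi⟩ := hx
      exact Set.mem_biUnion hi hxi
    refine measure_mono_null hsub ?_
    refine le_antisymm (le_trans (measure_biUnion_finset_le E _) ?_) (zero_le)
    apply le_of_eq
    apply Finset.sum_eq_zero
    intro i hi
    have hi0 : i ≠ 0 := Finset.ne_of_mem_erase hi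
    have heq : π ((fun x : ∀ j, X j => x i) ⁻¹' ((↑(t i) : Set (X i))ᶜ)) = μ i ((↑(t i) : Set (X i))ᶜ) := by
      rw [← hmarg i, Measure.map_apply (measurable_pi_apply i) (t i).measurableSet.compl]
    rw [heq]
    exact ht_compl i hi0
  -- update lemma
  have hupd : ∀ p x : ∀ i, X i, (∀ i ∈ E, x i = p i) → Function.update p 0 (x 0) = x := by
    intro p x hx
    funext j
    by_cases hj : j = 0
    · subst hj; simp
    · rw [Function.update_of_ne hj]
      exact (hx j (Finset.mem_erase.mpr ⟨hj, Finset.mem_univ j⟩)).symm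
  -- key slice inequality
  have hkey : ∀ p ∈ K, ∀ A : Set (∀ i, X i), MeasurableSet A →
      π (A ∩ Sl p) ≤ cp p * P (A ∩ Sl p) := by
    intro p hp A hA
    set C : ∀ i, Set (X i) :=
      fun i => if i = 0 then {y | Function.update p i y ∈ A} else {p i} with hCdef
    have hC0 : C 0 = {y | Function.update p 0 y ∈ A} := if_pos rfl
    have hCi : ∀ i, i ≠ 0 → C i = {p i} := fun i hi => if_neg hi
    have hC0m : MeasurableSet (C 0) := by
      rw [hC0]
      exact measurable_update p hA
    have hAS : A ∩ Sl p = Set.pi Set.univ C := by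
      ext x
      simp only [Set.mem_inter_iff, Set.mem_pi, Set.mem_univ, forall_true_left]
      constructor
      · rintro ⟨hxA, hxS⟩ i
        by_cases hi : i = 0
        · subst hi
          rw [hC0]
          show Function.update p 0 (x 0) ∈ A
          rw [hupd p x hxS]
          exact hxA
        · rw [hCi i hi]
          exact hxS i (Finset.mem_erase.mpr ⟨hi, Finset.mem_univ i⟩)
      · intro h
        have hxS : x ∈ Sl p := by
          intro i hi
          have h1 := h i
          rw [hCi i (Finset.ne_of_mem_erase hi)] at h1
          exact h1
        refine ⟨?_, hxS⟩
        have h0 := h 0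
        rw [hC0] at h0
        have h0' : Function.update p 0 (x 0) ∈ A := h0
        rwa [hupd p x hxS] at h0'
    have hπle : π (A ∩ Sl p) ≤ μ 0 (C 0) := by
      have hsub : A ∩ Sl p ⊆ (fun x : ∀ j, X j => x 0) ⁻¹' C 0 := by
        rintro x ⟨hxA, hxS⟩
        simp only [Set.mem_preimage, hC0, Set.mem_setOf_eq]
        rw [hupd p x hxS]
        exact hxA
      calc π (A ∩ Sl p) ≤ π ((fun x : ∀ j, X j => x 0) ⁻¹' C 0) := measure_mono hsub
        _ = μ 0 (C 0) := by
            rw [← hmarg 0, Measure.map_apply (measurable_pi_apply 0) hC0m]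
    have hPeq : P (A ∩ Sl p) = μ 0 (C 0) * ∏ i ∈ E, μ i {p i} := by
      rw [hAS, hPdef, Measure.pi_pi]
      rw [← Finset.mul_prod_erase Finset.univ (fun i => μ i (C i)) (Finset.mem_univ 0)]
      congr 1
      apply Finset.prod_congr rfl
      intro i hi
      rw [hCi i (Finset.ne_of_mem_erase hi)]
    have hcancel : cp p * (μ 0 (C 0) * ∏ i ∈ E, μ i {p i}) = μ 0 (C 0) := by
      simp only [hcpdef]
      rw [mul_comm (μ 0 (C 0)), ← mul_assoc, ← Finset.prod_mul_distrib]
      have hone : ∏ i ∈ E, ((μ i {p i})⁻¹ * μ i {p i}) = 1 := by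
        apply Finset.prod_eq_one
        intro i hi
        exact ENNReal.inv_mul_cancel
          (ht_ne i (Finset.ne_of_mem_erase hi) _ ((hKmem p hp).2 i hi)) (measure_ne_top _ _)
      rw [hone, one_mul]
    rw [hPeq, hcancel]
    exact hπle
  -- global inequality
  have hle : ∀ A : Set (∀ i, X i), MeasurableSet A → π A ≤ ∫⁻ x in A, c' x ∂P := by
    intro A hA
    have h1 : π A ≤ π (A ∩ G) := by
      calc π A ≤ π ((A ∩ G) ∪ Gᶜ) := by
            apply measure_mono
            intro x hx
            by_cases hxG : x ∈ G
            · exact Or.inl ⟨hx, hxG⟩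
            · exact Or.inr hxG
        _ ≤ π (A ∩ G) + π Gᶜ := measure_union_le _ _
        _ = π (A ∩ G) := by rw [hGc, add_zero]
    have h2 : A ∩ G ⊆ ⋃ p ∈ K, (A ∩ Sl p) := by
      rintro x ⟨hxA, hxG⟩
      have hpK : (fun i => if i = 0 then x₀ i else x i) ∈ K := by
        rw [hKdef, Fintype.mem_piFinset]
        intro i
        by_cases hi : i = 0
        · rw [if_pos hi, if_pos hi, Finset.mem_singleton]
        · rw [if_neg hi, if_neg hi]
          exact hxG i (Finset.mem_erase.mpr ⟨hi, Finset.mem_univ i⟩)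
      refine Set.mem_biUnion hpK ⟨hxA, ?_⟩
      intro i hi
      exact (if_neg (Finset.ne_of_mem_erase hi)).symm
    calc π A ≤ π (A ∩ G) := h1
      _ ≤ ∑ p ∈ K, π (A ∩ Sl p) :=
          le_trans (measure_mono h2) (measure_biUnion_finset_le K _)
      _ ≤ ∑ p ∈ K, cp p * P (A ∩ Sl p) := Finset.sum_le_sum (fun p hp => hkey p hp A hA)
      _ = ∫⁻ x in A, c' x ∂P := by
          simp only [hc'def]
          rw [lintegral_finset_sum K (fun p _ => measurable_const.indicator (hSlmeas p))]
          apply Finset.sum_congr rfl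
          intro p _
          rw [lintegral_indicator (hSlmeas p), setLIntegral_const,
            Measure.restrict_apply (hSlmeas p), Set.inter_comm]
  -- absolute continuity
  have hac : π ≪ P := by
    refine Measure.AbsolutelyContinuous.mk (fun A hA hA0 => ?_)
    have h1 := hle A hA
    rw [Measure.restrict_eq_zero.mpr hA0, lintegral_zero_measure] at h1
    exact le_antisymm h1 (zero_le)
  -- Radon-Nikodym derivative bound
  set ρ : (∀ i, X i) → ℝ≥0∞ := π.rnDeriv P with hρdef
  have hρmeas : Measurable ρ := Measure.measurable_rnDeriv π P
  have hρle : ρ ≤ᵐ[P] c' := by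
    refine ae_le_of_forall_setLIntegral_le_of_sigmaFinite hρmeas (fun A hA _ => ?_)
    rw [hρdef, Measure.setLIntegral_rnDeriv hac]
    exact hle A hA
  set M : ℝ≥0∞ := ∑ p ∈ K, cp p with hMdef
  have hM_ne_top : M ≠ ∞ := by
    simp only [hMdef]
    exact (ENNReal.sum_lt_top.mpr (fun p hp => (hcp_ne_top p hp).lt_top)).ne
  have hc'leM : ∀ x, c' x ≤ M := by
    intro x
    refine Finset.sum_le_sum (fun p _ => ?_)
    by_cases h : x ∈ Sl p
    · rw [Set.indicator_of_mem h]
    · rw [Set.indicator_of_notMem h]; exact zero_le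
  -- the log-weight function
  set g : (∀ i, X i) → ℝ := fun x => ∑ i ∈ E, ∑ a ∈ t i,
    Set.indicator {y : ∀ j, X j | y i = a} (fun _ => -Real.log ((μ i {a}).toReal)) x with hgdef
  have hsetm : ∀ (i : Fin N) (a : X i), MeasurableSet {y : ∀ j, X j | y i = a} :=
    fun i a => measurable_pi_apply i (measurableSet_singleton a)
  have hgmeas : Measurable g := by
    apply Finset.measurable_sum
    intro i _
    apply Finset.measurable_sum
    intro a _
    exact measurable_const.indicator (hsetm i a)
  set B : ℝ := ∑ i ∈ E, ∑ a ∈ t i, |Real.log ((μ i {a}).toReal)| with hBdef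
  have hgB : ∀ x, |g x| ≤ B := by
    intro x
    simp only [hgdef, hBdef]
    refine (Finset.abs_sum_le_sum_abs _ _).trans (Finset.sum_le_sum fun i _ => ?_)
    refine (Finset.abs_sum_le_sum_abs _ _).trans (Finset.sum_le_sum fun a _ => ?_)
    by_cases h : x ∈ {y : ∀ j, X j | y i = a}
    · rw [Set.indicator_of_mem h, abs_neg]
    · rw [Set.indicator_of_notMem h, abs_zero]
      exact abs_nonneg _
  have hgslice : ∀ p ∈ K, ∀ x ∈ Sl p,
      g x = ∑ i ∈ E, -Real.log ((μ i {p i}).toReal) := by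
    intro p hp x hx
    simp only [hgdef]
    apply Finset.sum_congr rfl
    intro i hi
    have hxi : x i = p i := hx i hi
    have hpi : p i ∈ t i := (hKmem p hp).2 i hi
    rw [Finset.sum_eq_single_of_mem (p i) hpi ?_]
    · exact Set.indicator_of_mem (show x ∈ {y : ∀ j, X j | y i = p i} from hxi) _
    · intro a _ hne
      apply Set.indicator_of_notMem
      intro hmem
      have hxa : x i = a := hmem
      exact hne (hxa.symm.trans hxi)
  -- log of cp
  have hlogcp : ∀ p ∈ K,
      Real.log ((cp p).toReal) = ∑ i ∈ E, -Real.log ((μ i {p i}).toReal) := by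
    intro p hp
    have h1 : (cp p).toReal = ∏ i ∈ E, ((μ i {p i}).toReal)⁻¹ := by
      simp only [hcpdef]
      rw [ENNReal.toReal_prod]
      exact Finset.prod_congr rfl (fun i _ => ENNReal.toReal_inv _)
    rw [h1, Real.log_prod]
    · exact Finset.sum_congr rfl (fun i _ => by rw [Real.log_inv])
    · intro i hi
      have h0 : μ i {p i} ≠ 0 :=
        ht_ne i (Finset.ne_of_mem_erase hi) _ ((hKmem p hp).2 i hi)
      exact inv_ne_zero (ENNReal.toReal_ne_zero.mpr ⟨h0, measure_ne_top _ _⟩)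
  -- pointwise a.e. bound
  have hpt : ∀ᵐ x ∂P, (ρ x).toReal * Real.log ((ρ x).toReal) ≤ (ρ x).toReal * g x := by
    filter_upwards [hρle, Measure.rnDeriv_lt_top π P] with x hxc hxt
    by_cases h0 : ρ x = 0
    · simp [h0]
    · have hρpos : 0 < (ρ x).toReal := ENNReal.toReal_pos h0 hxt.ne
      have hc0 : c' x ≠ 0 := by
        intro h
        exact h0 (le_antisymm (h ▸ hxc) (zero_le))
      have hc0' : ∑ p ∈ K, (Sl p).indicator (fun _ => cp p) x ≠ 0 := by
        simpa only [hc'def] using hc0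
      obtain ⟨p, hp, hne0⟩ := Finset.exists_ne_zero_of_sum_ne_zero hc0'
      have hxp : x ∈ Sl p := by
        by_contra hxp
        exact hne0 (Set.indicator_of_notMem hxp _)
      have hc'x : c' x = cp p := by
        simp only [hc'def]
        rw [Finset.sum_eq_single_of_mem p hp ?_]
        · exact Set.indicator_of_mem hxp _
        · intro q hq hqp
          apply Set.indicator_of_notMem
          intro hxq
          exact hdisj q hq p hp hqp x hxq hxp
      have hlog1 : Real.log ((ρ x).toReal) ≤ g x := by
        have h1 : (ρ x).toReal ≤ (cp p).toReal := by
          refine (ENNReal.toReal_le_toReal hxt.ne (hcp_ne_top p hp)).mpr ?_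
          rw [← hc'x]
          exact hxc
        calc Real.log ((ρ x).toReal) ≤ Real.log ((cp p).toReal) :=
              Real.log_le_log hρpos h1
          _ = ∑ i ∈ E, -Real.log ((μ i {p i}).toReal) := hlogcp p hp
          _ = g x := (hgslice p hp x hxp).symm
      exact mul_le_mul_of_nonneg_left hlog1 hρpos.le
  -- integrability
  have hρM : ∀ᵐ x ∂P, (ρ x).toReal ≤ M.toReal := by
    filter_upwards [hρle, Measure.rnDeriv_lt_top π P] with x hxc hxt
    exact (ENNReal.toReal_le_toReal hxt.ne hM_ne_top).mpr (hxc.trans (hc'leM x))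
  have hmeas1 : Measurable (fun x => (ρ x).toReal * Real.log ((ρ x).toReal)) :=
    (hρmeas.ennreal_toReal).mul (Real.measurable_log.comp hρmeas.ennreal_toReal)
  have hInt1 : Integrable (fun x => (ρ x).toReal * Real.log ((ρ x).toReal)) P := by
    refine Integrable.mono' (integrable_const (1 + M.toReal ^ 2))
      hmeas1.aestronglyMeasurable ?_
    filter_upwards [hρM] with x hx
    rw [Real.norm_eq_abs]
    refine (abs_mul_log_le_one_add_sq ENNReal.toReal_nonneg).trans ?_
    have h1 : (ρ x).toReal ^ 2 ≤ M.toReal ^ 2 := by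
      have := ENNReal.toReal_nonneg (a := ρ x)
      nlinarith
    linarith
  have hInt2 : Integrable (fun x => (ρ x).toReal * g x) P := by
    refine Integrable.mono' (integrable_const (M.toReal * B))
      ((hρmeas.ennreal_toReal).mul hgmeas).aestronglyMeasurable ?_
    filter_upwards [hρM] with x hx
    rw [Real.norm_eq_abs, abs_mul, abs_of_nonneg ENNReal.toReal_nonneg]
    exact mul_le_mul hx (hgB x) (abs_nonneg _) ENNReal.toReal_nonneg
  have hIntTerm : ∀ (i : Fin N) (a : X i), Integrable (fun x => (ρ x).toReal *
      Set.indicator {y : ∀ j, X j | y i = a} (fun _ => -Real.log ((μ i {a}).toReal)) x) P := by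
    intro i a
    refine Integrable.mono' (integrable_const (M.toReal * |Real.log ((μ i {a}).toReal)|))
      ((hρmeas.ennreal_toReal).mul (measurable_const.indicator (hsetm i a))).aestronglyMeasurable ?_
    filter_upwards [hρM] with x hx
    rw [Real.norm_eq_abs, abs_mul, abs_of_nonneg ENNReal.toReal_nonneg]
    refine mul_le_mul hx ?_ (abs_nonneg _) ENNReal.toReal_nonneg
    by_cases h : x ∈ {y : ∀ j, X j | y i = a}
    · rw [Set.indicator_of_mem h, abs_neg]
    · rw [Set.indicator_of_notMem h, abs_zero]
      exact abs_nonneg _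
  -- marginal slices
  have hπslice : ∀ (i : Fin N) (a : X i), π {y : ∀ j, X j | y i = a} = μ i {a} := by
    intro i a
    rw [← hmarg i, Measure.map_apply (measurable_pi_apply i) (measurableSet_singleton a)]
    rfl
  have hterm : ∀ (i : Fin N) (a : X i), ∫ x, (ρ x).toReal *
      Set.indicator {y : ∀ j, X j | y i = a} (fun _ => -Real.log ((μ i {a}).toReal)) x ∂P
      = (μ i {a}).toReal * -Real.log ((μ i {a}).toReal) := by
    intro i a
    have hrw : ∀ x, (ρ x).toReal *
        Set.indicator {y : ∀ j, X j | y i = a} (fun _ => -Real.log ((μ i {a}).toReal)) x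
        = Set.indicator {y : ∀ j, X j | y i = a}
            (fun x => -Real.log ((μ i {a}).toReal) * (ρ x).toReal) x := by
      intro x
      by_cases h : x ∈ {y : ∀ j, X j | y i = a}
      · rw [Set.indicator_of_mem h, Set.indicator_of_mem h, mul_comm]
      · rw [Set.indicator_of_notMem h, Set.indicator_of_notMem h, mul_zero]
    simp_rw [hrw]
    rw [integral_indicator (hsetm i a), integral_const_mul, hρdef,
      Measure.setIntegral_toReal_rnDeriv hac, measureReal_def, hπslice i a, mul_comm]
  -- main estimate
  have hmain : ∫ x, (ρ x).toReal * Real.log ((ρ x).toReal) ∂P ≤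
      ∑ i ∈ E, Real.log (n i) := by
    have hstep1 := integral_mono_ae hInt1 hInt2 hpt
    have hexp : ∀ x, (ρ x).toReal * g x = ∑ i ∈ E, ∑ a ∈ t i, (ρ x).toReal *
        Set.indicator {y : ∀ j, X j | y i = a}
          (fun _ => -Real.log ((μ i {a}).toReal)) x := by
      intro x
      simp only [hgdef]
      rw [Finset.mul_sum]
      exact Finset.sum_congr rfl (fun i _ => Finset.mul_sum _ _ _)
    have hgsum : ∫ x, (ρ x).toReal * g x ∂P = ∑ i ∈ E, ∑ a ∈ t i,
        (μ i {a}).toReal * -Real.log ((μ i {a}).toReal) := by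
      simp_rw [hexp]
      rw [integral_finset_sum E (fun i _ => integrable_finset_sum _ (fun a _ => hIntTerm i a))]
      refine Finset.sum_congr rfl (fun i _ => ?_)
      rw [integral_finset_sum (t i) (fun a _ => hIntTerm i a)]
      exact Finset.sum_congr rfl (fun a _ => hterm i a)
    refine hstep1.trans ?_
    rw [hgsum]
    apply Finset.sum_le_sum
    intro i hi
    have hi0 : i ≠ 0 := Finset.ne_of_mem_erase hi
    have hpos : ∀ a ∈ t i, 0 < (μ i {a}).toReal := fun a ha =>
      ENNReal.toReal_pos (ht_ne i hi0 a ha) (measure_ne_top _ _)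
    have hsum1 : ∑ a ∈ t i, (μ i {a}).toReal = 1 := by
      have h1 : μ i ↑(t i) = ∑ a ∈ t i, μ i {a} := by
        rw [show (↑(t i) : Set (X i)) = ⋃ a ∈ t i, {a} by ext y; simp]
        exact measure_biUnion_finset
          (fun a _ b _ hab => by simpa [Set.disjoint_singleton] using hab)
          (fun a _ => measurableSet_singleton a)
      have h2 : μ i ↑(t i) = 1 :=
        (prob_compl_eq_zero_iff (t i).measurableSet).mp (ht_compl i hi0)
      rw [← ENNReal.toReal_sum (fun a _ => measure_ne_top _ _), ← h1, h2, ENNReal.toReal_one]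
    have hent := entropy_sum_le (t i) (fun a => (μ i {a}).toReal) hpos hsum1 (ht_card i hi0)
    exact le_trans (le_of_eq (Finset.sum_congr rfl (fun a _ => rfl))) hent
  -- conclusion
  unfold fDiv
  rw [if_pos ⟨hac, hInt1⟩]
  exact EReal.coe_le_coe_iff.mpr hmain

end
end

section
/- Let ĥ₁ ∈ L¹(μ₁) and ĥ₂ ∈ L¹(μ₂) be Kantorovich potentials for OT, i.e. ĥ₁(x) + ĥ₂(y) ≤ c(x,y) for all (x,y) ∈ X₁×X₂ and ∫ ĥ₁ dμ₁ + ∫ ĥ₂ dμ₂ = OT, and set ĉ(x,y) = c(x,y) − ĥ₁(x) − ĥ₂(y) ≥ 0. Define f*(y) = sup_{x ≥ 0} (xy − f(x)) and f*_ε(y) = ε·f*(y/ε). Then OT_{f,ε} − OT ≥ sup_{a ∈ ℝ} ( a − ∫ f*_ε(a − ĉ(x,y)) dμ₁(x)dμ₂(y) ) ≥ sup_{a ∈ ℝ} ( a − f*_ε(a)·(μ₁⊗μ₂)({(x,y) : ĉ(x,y) ≤ a}) ) − ε·f*(0). -/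
open MeasureTheory ENNReal Filter

noncomputable section

/-- The convex conjugate `f*(y) = sup_{x ≥ 0} (x y − f x)`. -/
def fStar (f : ℝ → ℝ) (y : ℝ) : ℝ :=
  sSup ((fun x => x * y - f x) '' Set.Ici (0 : ℝ))


namespace DLBAux

variable {f : ℝ → ℝ}

lemma set_nonempty (f : ℝ → ℝ) (y : ℝ) : ((fun x => x * y - f x) '' Set.Ici (0:ℝ)).Nonempty :=
  ⟨0 * y - f 0, ⟨0, Set.self_mem_Ici, rfl⟩⟩

lemma set_bddAbove (hf_bdd : BddBelow (f '' Set.Ici (0 : ℝ)))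
    (hsl : Tendsto (fun x : ℝ => f x / x) atTop atTop) (y : ℝ) :
    BddAbove ((fun x => x * y - f x) '' Set.Ici (0:ℝ)) := by
  obtain ⟨B, hB⟩ := hf_bdd
  obtain ⟨M, hM⟩ := (tendsto_atTop.1 hsl (y+1)).exists_forall_of_atTop
  set M' := max M 1 with hM'
  refine ⟨max 0 (M' * |y| - B), ?_⟩
  rintro _ ⟨x, hx, rfl⟩
  have hx0 : (0:ℝ) ≤ x := hx
  simp only []
  rcases le_or_gt x M' with h | h
  · refine le_trans ?_ (le_max_right _ _)
    have h1 : x * y ≤ M' * |y| := by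
      calc x * y ≤ x * |y| := by nlinarith [le_abs_self y, abs_nonneg y, hx0]
        _ ≤ M' * |y| := by nlinarith [abs_nonneg y, hx0]
    have h2 : B ≤ f x := hB ⟨x, hx, rfl⟩
    linarith
  · have hx1 : (1:ℝ) ≤ x := le_trans (le_max_right M 1) h.le
    have hxpos : (0:ℝ) < x := lt_of_lt_of_le one_pos hx1
    have := hM x (le_trans (le_max_left M 1) h.le)
    have hM'1 : (1:ℝ) ≤ M' := le_max_right M 1
    have hfx : (y + 1) * x ≤ f x := by
      rw [le_div_iff₀ hxpos] at this; linarith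
    refine le_trans ?_ (le_max_left _ _)
    nlinarith

lemma rpow_add_le {a b p : ℝ} (ha : 0 ≤ a) (hb : 0 ≤ b) (hp : 0 ≤ p) :
    (a + b) ^ p ≤ 2 ^ p * a ^ p + 2 ^ p * b ^ p := by
  have h2 : (0:ℝ) ≤ 2 ^ p := Real.rpow_nonneg (by norm_num) p
  have hmax : (a + b) ^ p ≤ (2 * max a b) ^ p := by
    apply Real.rpow_le_rpow (by linarith) ?_ hp
    rcases le_total a b with h | h
    · simp [max_eq_right h]; linarith
    · simp [max_eq_left h]; linarith
  have h2m : (2 * max a b) ^ p = 2 ^ p * (max a b) ^ p :=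
    Real.mul_rpow (by norm_num) (le_max_of_le_left ha)
  have hmm : (max a b) ^ p ≤ a ^ p + b ^ p := by
    rcases le_total a b with h | h
    · rw [max_eq_right h]; have := Real.rpow_nonneg ha p; linarith
    · rw [max_eq_left h]; have := Real.rpow_nonneg hb p; linarith
  calc (a + b) ^ p ≤ 2 ^ p * (max a b) ^ p := h2m ▸ hmax
    _ ≤ 2 ^ p * a ^ p + 2 ^ p * b ^ p := by nlinarith

lemma moment_integrable {Y : Type*} [MeasurableSpace Y] [MetricSpace Y]
    [OpensMeasurableSpace Y] {p : ℝ} (hp : 1 ≤ p) {μ : Measure Y} [IsProbabilityMeasure μ]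
    (hm : ∃ x₀ : Y, ∫⁻ x, ENNReal.ofReal (dist x x₀ ^ p) ∂μ < ⊤) (xh : Y) :
    Integrable (fun x => dist x xh ^ p) μ := by
  obtain ⟨x₀, hx₀⟩ := hm
  have hp0 : (0:ℝ) ≤ p := by linarith
  have hcont : ∀ y : Y, Continuous fun x : Y => dist x y ^ p := fun y =>
    (Real.continuous_rpow_const hp0).comp (continuous_id.dist continuous_const)
  have h0 : Integrable (fun x => dist x x₀ ^ p) μ := by
    rw [← MeasureTheory.lintegral_ofReal_ne_top_iff_integrable
      (hcont x₀).aestronglyMeasurable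
      (Filter.Eventually.of_forall fun x => Real.rpow_nonneg dist_nonneg p)]
    exact hx₀.ne
  refine Integrable.mono' ((h0.const_mul (2 ^ p)).add
    (integrable_const (2 ^ p * dist x₀ xh ^ p))) (hcont xh).aestronglyMeasurable
    (Filter.Eventually.of_forall fun x => ?_)
  rw [Real.norm_eq_abs, abs_of_nonneg (Real.rpow_nonneg dist_nonneg p)]
  calc dist x xh ^ p ≤ (dist x x₀ + dist x₀ xh) ^ p :=
        Real.rpow_le_rpow dist_nonneg (dist_triangle x x₀ xh) hp0
    _ ≤ 2 ^ p * dist x x₀ ^ p + 2 ^ p * dist x₀ xh ^ p :=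
        rpow_add_le dist_nonneg dist_nonneg hp0

variable (hf_bdd : BddBelow (f '' Set.Ici (0 : ℝ)))
    (hsl : Tendsto (fun x : ℝ => f x / x) atTop atTop)
include hf_bdd hsl

lemma young {x : ℝ} (hx : 0 ≤ x) (y : ℝ) : x * y - f x ≤ fStar f y :=
  le_csSup (set_bddAbove hf_bdd hsl y) ⟨x, hx, rfl⟩

lemma fStar_mono : Monotone (fStar f) := by
  intro y y' hy
  refine csSup_le (set_nonempty f y) ?_
  rintro _ ⟨x, hx, rfl⟩
  calc x * y - f x ≤ x * y' - f x := by have : (0:ℝ) ≤ x := hx; nlinarith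
    _ ≤ fStar f y' := young hf_bdd hsl hx y'

lemma neg_f_zero_le (y : ℝ) : -f 0 ≤ fStar f y := by
  simpa using young hf_bdd hsl (le_refl (0:ℝ)) y

lemma fStar_measurable : Measurable (fStar f) := (fStar_mono hf_bdd hsl).measurable

lemma zero_le_fStar (hf1 : f 1 = 0) (y : ℝ) (hy : 0 ≤ y) : 0 ≤ fStar f y := by
  have h1 := young hf_bdd hsl zero_le_one y
  have h2 := fStar_mono hf_bdd hsl hy
  simp only [hf1, one_mul, sub_zero] at h1
  rcases le_or_gt 0 y with h | h
  · linarith [h1]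
  · linarith [h1]

end DLBAux

/-- Lemma 4.1 (dual lower bound): if `ĥ₁, ĥ₂` are Kantorovich potentials for `OT` and
`ĉ = c − ĥ₁ ⊕ ĥ₂`, then for every `a ∈ ℝ`,
`OT_{f,ε} − OT ≥ a − ∫ f*_ε(a − ĉ) d(μ₁ ⊗ μ₂)` and
`OT_{f,ε} − OT ≥ a − f*_ε(a) (μ₁ ⊗ μ₂)(ĉ ≤ a) − ε f*(0)`.
(The integral `∫ f*_ε(a − ĉ) d(μ₁ ⊗ μ₂)`, whose integrand is bounded below by `−ε f 0`, is
expressed as the extended-real quantity `∫⁻ (f*_ε(a − ĉ) + ε f 0) − ε f 0`.) -/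
theorem dual_lower_bound
    {X₁ X₂ : Type*}
    [MetricSpace X₁] [PolishSpace X₁] [MeasurableSpace X₁] [BorelSpace X₁]
    [MetricSpace X₂] [PolishSpace X₂] [MeasurableSpace X₂] [BorelSpace X₂]
    (p : ℝ) (hp : 1 ≤ p)
    (μ₁ : Measure X₁) (μ₂ : Measure X₂)
    [IsProbabilityMeasure μ₁] [IsProbabilityMeasure μ₂]
    (hμ₁_mom : HasMomentp p μ₁) (hμ₂_mom : HasMomentp p μ₂)
    (c : X₁ × X₂ → ℝ) (hc_cont : Continuous c)
    (C₀ : ℝ) (hC₀ : 0 ≤ C₀) (xhat : X₁ × X₂)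
    (hc_growth : ∀ x : X₁ × X₂,
      |c x| ≤ C₀ * (1 + (dist x.1 xhat.1 ^ p + dist x.2 xhat.2 ^ p)))
    (f : ℝ → ℝ)
    (hf_convex : StrictConvexOn ℝ (Set.Ici (0 : ℝ)) f)
    (hf_bdd : BddBelow (f '' Set.Ici (0 : ℝ)))
    (hf_one : f 1 = 0)
    (hf_superlinear : Tendsto (fun x : ℝ => f x / x) atTop atTop)
    (h₁ : X₁ → ℝ) (h₂ : X₂ → ℝ)
    (hh₁ : Integrable h₁ μ₁) (hh₂ : Integrable h₂ μ₂)
    (hpot : ∀ x : X₁, ∀ y : X₂, h₁ x + h₂ y ≤ c (x, y))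
    (hpot_opt : ∫ x, h₁ x ∂μ₁ + ∫ y, h₂ y ∂μ₂ = OTcost2 μ₁ μ₂ c)
    (chat : X₁ × X₂ → ℝ) (hchat : ∀ z : X₁ × X₂, chat z = c z - h₁ z.1 - h₂ z.2)
    (ε : ℝ) (hε : 0 < ε) :
    (∀ a : ℝ,
      ((OTcost2 μ₁ μ₂ c : ℝ) : EReal) + (a : EReal)
        - ((∫⁻ z, ENNReal.ofReal (ε * fStar f ((a - chat z) / ε) + ε * f 0)
            ∂(μ₁.prod μ₂) : ℝ≥0∞) : EReal)
        + ((ε * f 0 : ℝ) : EReal)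
      ≤ OTf2 μ₁ μ₂ c f ε) ∧
    (∀ a : ℝ,
      ((OTcost2 μ₁ μ₂ c + a
        - ε * fStar f (a / ε) * ((μ₁.prod μ₂) {z | chat z ≤ a}).toReal
        - ε * fStar f 0 : ℝ) : EReal)
      ≤ OTf2 μ₁ μ₂ c f ε) := by
    classical
    set P : Measure (X₁ × X₂) := μ₁.prod μ₂ with hPdef
    have hp0 : (0:ℝ) ≤ p := by linarith
    -- marginal moment integrability
    have hint1 : Integrable (fun x => dist x xhat.1 ^ p) μ₁ :=
      DLBAux.moment_integrable hp hμ₁_mom xhat.1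
    have hint2 : Integrable (fun y => dist y xhat.2 ^ p) μ₂ :=
      DLBAux.moment_integrable hp hμ₂_mom xhat.2
    -- measurability of chat w.r.t. P
    have hmapfst : P.map Prod.fst = μ₁ := by
      rw [hPdef, Measure.map_fst_prod]; simp
    have hmapsnd : P.map Prod.snd = μ₂ := by
      rw [hPdef, Measure.map_snd_prod]; simp
    have hchat_eq : chat = fun z => c z - h₁ z.1 - h₂ z.2 := funext hchat
    have hh₁P : AEStronglyMeasurable (fun z : X₁ × X₂ => h₁ z.1) P := by
      have : AEStronglyMeasurable h₁ (P.map Prod.fst) := by rw [hmapfst]; exact hh₁.1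
      exact this.comp_measurable measurable_fst
    have hh₂P : AEStronglyMeasurable (fun z : X₁ × X₂ => h₂ z.2) P := by
      have : AEStronglyMeasurable h₂ (P.map Prod.snd) := by rw [hmapsnd]; exact hh₂.1
      exact this.comp_measurable measurable_snd
    have hchatP : AEStronglyMeasurable chat P := by
      rw [hchat_eq]
      exact (hc_cont.aestronglyMeasurable.sub hh₁P).sub hh₂P
    obtain ⟨c', hc'meas, hc'ae⟩ := hchatP.aemeasurable
    have hchat_nonneg : ∀ z, 0 ≤ chat z := by
      intro z; rw [hchat z]
      have := hpot z.1 z.2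
      simp only [Prod.mk.eta] at this
      linarith
    -- per-coupling facts
    have key : ∀ π : Measure (X₁ × X₂), π ∈ couplings2 μ₁ μ₂ →
        ∀ a : ℝ,
        (((OTcost2 μ₁ μ₂ c : ℝ) : EReal) + (a : EReal)
          - ((∫⁻ z, ENNReal.ofReal (ε * fStar f ((a - chat z) / ε) + ε * f 0)
              ∂P : ℝ≥0∞) : EReal) + ((ε * f 0 : ℝ) : EReal)
          ≤ ((∫ z, c z ∂π : ℝ) : EReal) + (ε : EReal) * fDiv f π P) ∧
        (((OTcost2 μ₁ μ₂ c + a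
            - ε * fStar f (a / ε) * (P {z | chat z ≤ a}).toReal
            - ε * fStar f 0 : ℝ) : EReal)
          ≤ ((∫ z, c z ∂π : ℝ) : EReal) + (ε : EReal) * fDiv f π P) := by
      rintro π ⟨hπprob, hπfst, hπsnd⟩ a
      haveI : IsProbabilityMeasure π := hπprob
      by_cases hac : π ≪ P ∧ Integrable (fun z => f (π.rnDeriv P z).toReal) P
      case neg =>
        have : fDiv f π P = ⊤ := by rw [fDiv, if_neg hac]
        rw [this, EReal.coe_mul_top_of_pos hε, EReal.coe_add_top]
        exact ⟨le_top, le_top⟩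
      case pos =>
      have hfDiv : fDiv f π P = ((∫ z, f (π.rnDeriv P z).toReal ∂P : ℝ) : EReal) := by
        rw [fDiv, if_pos hac]
      set ρ : X₁ × X₂ → ℝ := fun z => (π.rnDeriv P z).toReal with hρdef
      set I : ℝ := ∫ z, f (ρ z) ∂P with hIdef
      -- integrability of c w.r.t. π
      have hd1π : Integrable (fun z : X₁ × X₂ => dist z.1 xhat.1 ^ p) π := by
        have : Integrable ((fun x => dist x xhat.1 ^ p) ∘ Prod.fst) π := by
          rw [← MeasureTheory.integrable_map_measure
            (by rw [hπfst]; exact hint1.1) measurable_fst.aemeasurable, hπfst]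
          exact hint1
        exact this
      have hd2π : Integrable (fun z : X₁ × X₂ => dist z.2 xhat.2 ^ p) π := by
        have : Integrable ((fun y => dist y xhat.2 ^ p) ∘ Prod.snd) π := by
          rw [← MeasureTheory.integrable_map_measure
            (by rw [hπsnd]; exact hint2.1) measurable_snd.aemeasurable, hπsnd]
          exact hint2
        exact this
      have hcπ : Integrable c π := by
        refine Integrable.mono'
          (((hd1π.add hd2π).const_mul C₀).add (integrable_const C₀))
          hc_cont.aestronglyMeasurable (Filter.Eventually.of_forall fun z => ?_)
        rw [Real.norm_eq_abs]
        have := hc_growth z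
        have h1 : (0:ℝ) ≤ dist z.1 xhat.1 ^ p := Real.rpow_nonneg dist_nonneg p
        have h2 : (0:ℝ) ≤ dist z.2 xhat.2 ^ p := Real.rpow_nonneg dist_nonneg p
        simp only [Pi.add_apply]
        nlinarith
      have hh₁π : Integrable (fun z : X₁ × X₂ => h₁ z.1) π := by
        have : Integrable (h₁ ∘ Prod.fst) π := by
          rw [← MeasureTheory.integrable_map_measure
            (by rw [hπfst]; exact hh₁.1) measurable_fst.aemeasurable, hπfst]
          exact hh₁
        exact this
      have hh₂π : Integrable (fun z : X₁ × X₂ => h₂ z.2) π := by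
        have : Integrable (h₂ ∘ Prod.snd) π := by
          rw [← MeasureTheory.integrable_map_measure
            (by rw [hπsnd]; exact hh₂.1) measurable_snd.aemeasurable, hπsnd]
          exact hh₂
        exact this
      have hchatπ : Integrable chat π := by
        rw [hchat_eq]
        have hsub1 : Integrable (fun z => c z - h₁ z.1) π := hcπ.sub hh₁π
        exact hsub1.sub hh₂π
      -- the key identity : ∫ c dπ = ∫ chat dπ + OT
      have hOT : ∫ z, c z ∂π = ∫ z, chat z ∂π + OTcost2 μ₁ μ₂ c := by
        have e1 : ∫ z, h₁ z.1 ∂π = ∫ x, h₁ x ∂μ₁ := by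
          rw [← hπfst, integral_map measurable_fst.aemeasurable
            (by rw [hπfst]; exact hh₁.1)]
        have e2 : ∫ z, h₂ z.2 ∂π = ∫ y, h₂ y ∂μ₂ := by
          rw [← hπsnd, integral_map measurable_snd.aemeasurable
            (by rw [hπsnd]; exact hh₂.1)]
        have : ∫ z, chat z ∂π
            = ∫ z, c z ∂π - ∫ z, h₁ z.1 ∂π - ∫ z, h₂ z.2 ∂π := by
          have hsub1 : Integrable (fun z => c z - h₁ z.1) π := hcπ.sub hh₁π
          rw [hchat_eq, integral_sub hsub1 hh₂π, integral_sub hcπ hh₁π]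
        rw [this, e1, e2, ← hpot_opt]; ring
      -- Radon--Nikodym change of variables
      have hρ_nonneg : ∀ z, 0 ≤ ρ z := fun z => ENNReal.toReal_nonneg
      have hrnint : Integrable (fun z => a - chat z) π :=
        (integrable_const a).sub hchatπ
      have hrn : ∫ z, (a - chat z) ∂π = ∫ z, ρ z * (a - chat z) ∂P := by
        rw [← MeasureTheory.integral_rnDeriv_smul hac.1 (f := fun z => a - chat z)]
        simp [hρdef, smul_eq_mul]
      have hleft : ∫ z, (a - chat z) ∂π = a - ∫ z, chat z ∂π := by
        rw [integral_sub (integrable_const a) hchatπ, integral_const]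
        simp
      have hrnint' : Integrable (fun z => ρ z * (a - chat z)) P := by
        have := (MeasureTheory.integrable_rnDeriv_smul_iff hac.1
          (f := fun z => a - chat z)).2 hrnint
        simpa [hρdef, smul_eq_mul] using this
      -- Young's inequality pointwise
      have hyoung : ∀ z, ρ z * (a - chat z)
          ≤ ε * fStar f ((a - chat z) / ε) + ε * f (ρ z) := by
        intro z
        have := DLBAux.young hf_bdd hf_superlinear (hρ_nonneg z) ((a - chat z) / ε)
        have hεne : ε ≠ 0 := ne_of_gt hε
        have hmul : ε * (ρ z * ((a - chat z) / ε) - f (ρ z))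
            ≤ ε * fStar f ((a - chat z) / ε) :=
          mul_le_mul_of_nonneg_left this (le_of_lt hε)
        have : ε * (ρ z * ((a - chat z) / ε)) = ρ z * (a - chat z) := by
          field_simp
        nlinarith [hmul, this]
      have hεf0 : 0 ≤ ε * fStar f 0 :=
        mul_nonneg hε.le (DLBAux.zero_le_fStar hf_bdd hf_superlinear hf_one 0 le_rfl)
      have hchatP_ae : AEMeasurable chat P := ⟨c', hc'meas, hc'ae⟩
      have hGaem : AEMeasurable (fun z => ε * fStar f ((a - chat z) / ε) + ε * f 0) P := by
        have h1 : AEMeasurable (fun z => (a - chat z) / ε) P :=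
          (aemeasurable_const.sub hchatP_ae).div_const ε
        have h2 : AEMeasurable (fun z => fStar f ((a - chat z) / ε)) P :=
          (DLBAux.fStar_measurable hf_bdd hf_superlinear).comp_aemeasurable h1
        exact (h2.const_mul ε).add_const (ε * f 0)
      have hGnonneg : ∀ z, 0 ≤ ε * fStar f ((a - chat z) / ε) + ε * f 0 := by
        intro z
        have := DLBAux.neg_f_zero_le hf_bdd hf_superlinear ((a - chat z) / ε)
        nlinarith
      constructor
      · -- first bound
        set L : ℝ≥0∞ :=
          ∫⁻ z, ENNReal.ofReal (ε * fStar f ((a - chat z) / ε) + ε * f 0) ∂P with hLdef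
        by_cases hL : L = ⊤
        · rw [hL]
          rw [EReal.coe_ennreal_top, EReal.sub_top, EReal.bot_add]
          exact bot_le
        · have hGint : Integrable
              (fun z => ε * fStar f ((a - chat z) / ε) + ε * f 0) P := by
            rw [← MeasureTheory.lintegral_ofReal_ne_top_iff_integrable
              hGaem.aestronglyMeasurable (Filter.Eventually.of_forall hGnonneg)]
            exact hL
          have hGeq : ∫ z, (ε * fStar f ((a - chat z) / ε) + ε * f 0) ∂P = L.toReal := by
            rw [hLdef, integral_eq_lintegral_of_nonneg_ae
              (Filter.Eventually.of_forall hGnonneg) hGaem.aestronglyMeasurable]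
          have hmono : ∫ z, ρ z * (a - chat z) ∂P
              ≤ ∫ z, ((ε * fStar f ((a - chat z) / ε) + ε * f 0) + ε * f (ρ z)
                  - ε * f 0) ∂P := by
            have hGadd : Integrable
                (fun z => (ε * fStar f ((a - chat z) / ε) + ε * f 0) + ε * f (ρ z)) P :=
              hGint.add (hac.2.const_mul ε)
            refine integral_mono hrnint'
              (hGadd.sub (integrable_const (ε * f 0))) fun z => ?_
            have := hyoung z
            simp only []
            linarith
          have hGadd : Integrable
              (fun z => (ε * fStar f ((a - chat z) / ε) + ε * f 0) + ε * f (ρ z)) P :=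
            hGint.add (hac.2.const_mul ε)
          have hRHS : ∫ z, ((ε * fStar f ((a - chat z) / ε) + ε * f 0) + ε * f (ρ z)
                  - ε * f 0) ∂P
              = L.toReal + ε * I - ε * f 0 := by
            rw [integral_sub hGadd (integrable_const (ε * f 0)),
              integral_add hGint (hac.2.const_mul ε), integral_const_mul, hGeq,
              integral_const]
            simp [hIdef, hρdef]
          have hreal : OTcost2 μ₁ μ₂ c + a - L.toReal + ε * f 0
              ≤ ∫ z, c z ∂π + ε * I := by
            have h1 : a - ∫ z, chat z ∂π ≤ L.toReal + ε * I - ε * f 0 := by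
              rw [← hleft, hrn]
              calc ∫ z, ρ z * (a - chat z) ∂P ≤ _ := hmono
                _ = L.toReal + ε * I - ε * f 0 := hRHS
            linarith [hOT]
          rw [hfDiv, ← EReal.coe_mul]
          have hLne : (L : EReal) ≠ ⊤ := by
            simp [EReal.coe_ennreal_eq_top_iff, hL]
          have hLnb : (L : EReal) ≠ ⊥ := by
            simp [EReal.coe_ennreal_ne_bot]
          have hLcoe : ((L.toReal : ℝ) : EReal) = (L : EReal) := by
            rw [← EReal.toReal_coe_ennreal (x := L)]
            exact EReal.coe_toReal hLne hLnb
          rw [← hLcoe]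
          exact_mod_cast hreal
      · -- second bound
        set s : Set (X₁ × X₂) := {z | c' z ≤ a} with hsdef
        have hs : MeasurableSet s := measurableSet_le hc'meas measurable_const
        have hsets : P s = P {z | chat z ≤ a} := by
          refine measure_congr ?_
          filter_upwards [hc'ae] with z hz
          show (c' z ≤ a) = (chat z ≤ a)
          rw [hz]
        set m : ℝ := (P s).toReal with hmdef
        have hBint : Integrable (fun z =>
            s.indicator (fun _ => ε * fStar f (a / ε)) z + ε * fStar f 0 + ε * f (ρ z)) P :=
          (((integrable_const (ε * fStar f (a / ε))).indicator hs).add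
            (integrable_const (ε * fStar f 0)) : Integrable (fun z =>
              s.indicator (fun _ => ε * fStar f (a / ε)) z + ε * fStar f 0) P).add
            (hac.2.const_mul ε)
        have hptwise : ∀ᵐ z ∂P, ρ z * (a - chat z)
            ≤ s.indicator (fun _ => ε * fStar f (a / ε)) z + ε * fStar f 0 + ε * f (ρ z) := by
          filter_upwards [hc'ae] with z hz
          have hy := hyoung z
          have hstar : ε * fStar f ((a - chat z) / ε)
              ≤ s.indicator (fun _ => ε * fStar f (a / ε)) z + ε * fStar f 0 := by
            by_cases hzs : z ∈ s
            · rw [Set.indicator_of_mem hzs]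
              have hle : (a - chat z) / ε ≤ a / ε := by
                have := hchat_nonneg z
                gcongr
                linarith
              have hmono := DLBAux.fStar_mono hf_bdd hf_superlinear hle
              have h0 : 0 ≤ ε * fStar f 0 :=
                mul_nonneg hε.le
                  (DLBAux.zero_le_fStar hf_bdd hf_superlinear hf_one 0 le_rfl)
              nlinarith
            · rw [Set.indicator_of_notMem hzs]
              have hgt : a < chat z := by
                rw [hz]
                exact lt_of_not_ge hzs
              have hle : (a - chat z) / ε ≤ 0 := by
                apply div_nonpos_of_nonpos_of_nonneg <;> linarith
              have hmono := DLBAux.fStar_mono hf_bdd hf_superlinear hle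
              nlinarith
          linarith
        have hmono2 : ∫ z, ρ z * (a - chat z) ∂P
            ≤ ∫ z, (s.indicator (fun _ => ε * fStar f (a / ε)) z + ε * fStar f 0
                + ε * f (ρ z)) ∂P :=
          integral_mono_ae hrnint' hBint hptwise
        have hBval : ∫ z, (s.indicator (fun _ => ε * fStar f (a / ε)) z + ε * fStar f 0
                + ε * f (ρ z)) ∂P
            = ε * fStar f (a / ε) * m + ε * fStar f 0 + ε * I := by
          have hi1 : Integrable (fun z : X₁ × X₂ =>
              s.indicator (fun _ => ε * fStar f (a / ε)) z) P :=
            (integrable_const (ε * fStar f (a / ε))).indicator hs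
          have hi2 : Integrable (fun z : X₁ × X₂ =>
              s.indicator (fun _ => ε * fStar f (a / ε)) z + ε * fStar f 0) P :=
            hi1.add (integrable_const (ε * fStar f 0))
          have hImul : ∫ z, ε * f (π.rnDeriv P z).toReal ∂P = ε * I := by
            rw [integral_const_mul, hIdef, hρdef]
          rw [integral_add hi2 (hac.2.const_mul ε),
            integral_add hi1 (integrable_const (ε * fStar f 0)),
            integral_indicator hs, setIntegral_const, hImul, integral_const]
          simp only [measureReal_def, measure_univ, ENNReal.toReal_one, one_smul, smul_eq_mul]
          rw [← hmdef]
          ring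
        have hreal : OTcost2 μ₁ μ₂ c + a
            - ε * fStar f (a / ε) * (P {z | chat z ≤ a}).toReal - ε * fStar f 0
            ≤ ∫ z, c z ∂π + ε * I := by
          have hm' : (P {z | chat z ≤ a}).toReal = m := by rw [hmdef, hsets]
          rw [hm']
          have h1 : a - ∫ z, chat z ∂π
              ≤ ε * fStar f (a / ε) * m + ε * fStar f 0 + ε * I := by
            rw [← hleft, hrn]
            calc ∫ z, ρ z * (a - chat z) ∂P ≤ _ := hmono2
              _ = _ := hBval
          linarith [hOT]
        rw [hfDiv, ← EReal.coe_mul]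
        exact_mod_cast hreal
    constructor
    · intro a
      refine le_sInf ?_
      rintro v ⟨π, hπ, rfl⟩
      exact (key π hπ a).1
    · intro a
      refine le_sInf ?_
      rintro v ⟨π, hπ, rfl⟩
      exact (key π hπ a).2


end
end

section
/- Let μ₁ = μ₂ be the uniform distribution on [0,1]^d ⊂ ℝ^d, let c(x,y) = Σ_{i=1}^d |x_i − y_i|, and let f(x) = (x^ρ − 1)/ρ for some ρ > 1. Then there exist constants K > 0 and K' ≥ 0 such that for all ε ∈ (0,1]: OT_{f,ε} − OT ≥ K·ε^{1/((ρ−1)d+1)} − K'·ε. -/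
open MeasureTheory ENNReal Filter

noncomputable section

set_option maxHeartbeats 2000000 in
/-- Proposition 4.2 (ii) (sharpness, `L^ρ` case): for `μ₁ = μ₂` uniform on `[0,1]^d`,
`c(x,y) = ∑ᵢ |xᵢ − yᵢ|` and `f x = (x^ρ − 1)/ρ` with `ρ > 1`, there are `K > 0`, `K' ≥ 0`
such that for all `ε ∈ (0,1]`: `OT_{f,ε} − OT ≥ K ε^{1/((ρ−1)d+1)} − K' ε`. -/
theorem sharpness_lipschitz_Lrho
    (d : ℕ) (hd : 0 < d) (ρ : ℝ) (hρ : 1 < ρ)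
    (μ : Measure (Fin d → ℝ))
    (hμ : μ = Measure.pi (fun _ : Fin d => volume.restrict (Set.Icc (0 : ℝ) 1)))
    (c : (Fin d → ℝ) × (Fin d → ℝ) → ℝ)
    (hc : ∀ z : (Fin d → ℝ) × (Fin d → ℝ), c z = ∑ i, |z.1 i - z.2 i|) :
    ∃ K : ℝ, 0 < K ∧ ∃ K' : ℝ, 0 ≤ K' ∧ ∀ ε : ℝ, ε ∈ Set.Ioc (0 : ℝ) 1 →
      ((OTcost2 μ μ c + K * ε ^ (1 / ((ρ - 1) * d + 1)) - K' * ε : ℝ) : EReal) ≤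
        OTf2 μ μ c (fun x => (x ^ ρ - 1) / ρ) ε := by
  have hceq : c = fun z : (Fin d → ℝ) × (Fin d → ℝ) => ∑ i, |z.1 i - z.2 i| := funext hc
  subst hceq
  set c : (Fin d → ℝ) × (Fin d → ℝ) → ℝ := fun z => ∑ i, |z.1 i - z.2 i| with hcdef
  have hccont : Continuous c := by
    apply continuous_finset_sum
    intro i _
    exact (((continuous_apply i).comp continuous_fst).sub
      ((continuous_apply i).comp continuous_snd)).abs
  have hcnonneg : ∀ z, 0 ≤ c z := fun z => Finset.sum_nonneg fun i _ => abs_nonneg _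
  have hρ0 : (0:ℝ) < ρ := lt_trans one_pos hρ
  haveI hres : IsProbabilityMeasure (volume.restrict (Set.Icc (0 : ℝ) 1)) :=
    ⟨by simp [Real.volume_Icc]⟩
  haveI hμprob : IsProbabilityMeasure μ := by
    rw [hμ]; infer_instance
  set P := μ.prod μ with hPdef
  haveI hPprob : IsProbabilityMeasure P := by rw [hPdef]; infer_instance
  set f : ℝ → ℝ := fun x => (x ^ ρ - 1) / ρ with hfdef
  -- constants
  set γ : ℝ := 1 / ((ρ - 1) * d + 1) with hγdef
  have hdR : (1:ℝ) ≤ d := by exact_mod_cast hd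
  have hDpos : 0 < (ρ - 1) * d + 1 := by
    have h := mul_nonneg (by linarith : (0:ℝ) ≤ ρ - 1) (by positivity : (0:ℝ) ≤ (d:ℝ))
    linarith
  have hγpos : 0 < γ := by positivity
  set C1 : ℝ := (2:ℝ) ^ (-ρ - d * (ρ - 1)) / ρ with hC1def
  have hC1pos : 0 < C1 := by
    have := Real.rpow_pos_of_pos (by norm_num : (0:ℝ) < 2) (-ρ - d * (ρ - 1))
    positivity
  set K : ℝ := min (1/4) C1 with hKdef
  have hKpos : 0 < K := lt_min (by norm_num) hC1pos
  have hKle : K ≤ 1/4 := min_le_left _ _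
  have hKleC1 : K ≤ C1 := min_le_right _ _
  refine ⟨K, hKpos, 2, by norm_num, ?_⟩
  intro ε hε
  obtain ⟨hε0, hε1⟩ := hε
  set δ : ℝ := ε ^ γ with hδdef
  have hδpos : 0 < δ := Real.rpow_pos_of_pos hε0 _
  -- OTcost2 ≤ 0
  have hdiag : Measurable fun x : Fin d → ℝ => (x, x) := measurable_id.prodMk measurable_id
  have hbdd : BddBelow ((fun π : Measure ((Fin d → ℝ) × (Fin d → ℝ)) =>
      ∫ z, c z ∂π) '' couplings2 μ μ) := by
    refine ⟨0, ?_⟩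
    rintro y ⟨π, hπ, rfl⟩
    exact integral_nonneg hcnonneg
  have hOTle : OTcost2 μ μ c ≤ 0 := by
    apply csInf_le hbdd
    refine ⟨μ.map (fun x => (x, x)), ⟨Measure.isProbabilityMeasure_map hdiag.aemeasurable, ?_, ?_⟩, ?_⟩
    · rw [Measure.map_map measurable_fst hdiag]
      simp [Function.comp_def, Measure.map_id]
    · rw [Measure.map_map measurable_snd hdiag]
      simp [Function.comp_def, Measure.map_id]
    · show ∫ z, c z ∂(μ.map fun x => (x, x)) = 0
      rw [integral_map hdiag.aemeasurable hccont.aestronglyMeasurable]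
      simp [hcdef]
  -- the key lower bound for every coupling
  have key : ∀ x ∈ ((fun π : Measure ((Fin d → ℝ) × (Fin d → ℝ)) =>
      ((∫ z, c z ∂π : ℝ) : EReal) + (ε : EReal) * fDiv f π P) '' couplings2 μ μ),
      ((K * δ - 2 * ε : ℝ) : EReal) ≤ x := by
    rintro x ⟨π, ⟨hπprob, hm1, hm2⟩, rfl⟩
    haveI := hπprob
    by_cases h : π ≪ P ∧ Integrable (fun z => f ((π.rnDeriv P z).toReal)) P
    · -- finite case
      have hfd : fDiv f π P = ((∫ z, f ((π.rnDeriv P z).toReal) ∂P : ℝ) : EReal) := by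
        delta fDiv; exact if_pos h
      show ((K * δ - 2 * ε : ℝ) : EReal) ≤ ((∫ z, c z ∂π : ℝ) : EReal) + (ε : EReal) * fDiv f π P
      rw [hfd, ← EReal.coe_mul, ← EReal.coe_add]
      rw [EReal.coe_le_coe_iff]
      obtain ⟨hac, hint⟩ := h
      set rdv : (Fin d → ℝ) × (Fin d → ℝ) → ℝ := fun z => (π.rnDeriv P z).toReal with hrdvdef
      set r : ℝ := ∫ z, f (rdv z) ∂P with hrdef
      set I : ℝ := ∫ z, c z ∂π with hIdef
      -- c is a.e. bounded by d under π
      have hGmeas : MeasurableSet (Set.pi Set.univ fun _ : Fin d => Set.Icc (0:ℝ) 1) :=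
        MeasurableSet.univ_pi fun _ => measurableSet_Icc
      have hGfull : μ (Set.pi Set.univ fun _ : Fin d => Set.Icc (0:ℝ) 1) = 1 := by
        rw [hμ, Measure.pi_pi]
        simp [Measure.restrict_apply, Real.volume_Icc]
      set G := Set.pi Set.univ fun _ : Fin d => Set.Icc (0:ℝ) 1 with hGdef
      have hGc : μ Gᶜ = 0 := by
        rw [measure_compl hGmeas (measure_ne_top _ _), hGfull, measure_univ]
        simp
      have hPGG : P ((G ×ˢ G)ᶜ) = 0 := by
        have hsub : (G ×ˢ G)ᶜ ⊆ (Gᶜ ×ˢ (Set.univ : Set (Fin d → ℝ))) ∪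
            ((Set.univ : Set (Fin d → ℝ)) ×ˢ Gᶜ) := by
          intro z hz
          by_cases h1 : z.1 ∈ G
          · right
            refine ⟨Set.mem_univ _, ?_⟩
            intro h2
            exact hz ⟨h1, h2⟩
          · left
            exact ⟨h1, Set.mem_univ _⟩
        refine measure_mono_null hsub ?_
        refine le_antisymm ((measure_union_le _ _).trans ?_) zero_le
        rw [hPdef, Measure.prod_prod, Measure.prod_prod, hGc]
        simp
      have hcae : ∀ᵐ z ∂π, ‖c z‖ ≤ (d : ℝ) := by
        have hπnull : π ((G ×ˢ G)ᶜ) = 0 := hac hPGG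
        have : ∀ᵐ z ∂π, z ∈ G ×ˢ G := by
          rw [ae_iff]
          convert hπnull using 2
          rfl
        filter_upwards [this] with z hz
        obtain ⟨hz1, hz2⟩ := hz
        rw [Real.norm_eq_abs, abs_of_nonneg (hcnonneg z), hcdef]
        calc ∑ i, |z.1 i - z.2 i| ≤ ∑ _i : Fin d, (1:ℝ) := by
              apply Finset.sum_le_sum
              intro i _
              have h1 := hz1 i (Set.mem_univ i)
              have h2 := hz2 i (Set.mem_univ i)
              simp only [Set.mem_Icc] at h1 h2
              rw [abs_le]
              constructor <;> linarith [h1.1, h1.2, h2.1, h2.2]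
          _ = (d : ℝ) := by simp
      have hIint : Integrable c π :=
        Integrable.mono' (integrable_const (d : ℝ)) hccont.aestronglyMeasurable hcae
      have hInonneg : 0 ≤ I := integral_nonneg hcnonneg
      -- f is bounded below by -(1/ρ) on [0,∞)
      have hfge : ∀ t : ℝ, 0 ≤ t → -(1/ρ) ≤ f t := by
        intro t ht
        have h1 : 0 ≤ t ^ ρ := Real.rpow_nonneg ht ρ
        simp only [hfdef]
        have h2 : (-1 : ℝ) / ρ ≤ (t ^ ρ - 1) / ρ := (div_le_div_iff_of_pos_right hρ0).mpr (by linarith)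
        rw [neg_div] at h2
        exact h2
      have hrge : -(1/ρ) ≤ r := by
        have h0 : ∫ z, (-(1/ρ) : ℝ) ∂P = -(1/ρ) := by
          simp [measure_univ]
        rw [hrdef, ← h0]
        exact integral_mono (integrable_const _) hint fun z => hfge _ ENNReal.toReal_nonneg
      by_cases hI : δ / 2 ≤ I
      · -- transport cost is large
        have hρinv : 1/ρ ≤ 1 := by
          rw [div_le_one hρ0]; linarith
        have hrge1 : (-1 : ℝ) ≤ r := by linarith [hrge, hρinv]
        have h2 : -ε ≤ ε * r := by
          have h := mul_le_mul_of_nonneg_left hrge1 hε0.le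
          have h' : ε * (-1 : ℝ) = -ε := by ring
          linarith [h, h']
        have hKδ : K * δ ≤ δ / 2 := by
          have := mul_le_mul_of_nonneg_right hKle hδpos.le
          linarith
        linarith
      · -- transport cost is small: use Jensen on the strip
        push_neg at hI
        set A := c ⁻¹' Set.Iic δ with hAdef
        have hA : MeasurableSet A := hccont.measurable measurableSet_Iic
        -- Markov inequality
        have hmark : δ * (π Aᶜ).toReal ≤ I := by
          have h1 : ∫ z in Aᶜ, δ ∂π ≤ ∫ z in Aᶜ, c z ∂π := by
            apply setIntegral_mono_on integrableOn_const
              hIint.integrableOn hA.compl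
            intro z hz
            exact le_of_lt (not_le.mp hz)
          have h2 : ∫ z in Aᶜ, c z ∂π ≤ I :=
            setIntegral_le_integral hIint (ae_of_all _ hcnonneg)
          rw [setIntegral_const, smul_eq_mul, mul_comm, measureReal_def] at h1
          linarith
        have hπAc : (π Aᶜ).toReal < 1/2 := by
          have h' : δ * (π Aᶜ).toReal < δ * (1/2) := by linarith [hmark]
          exact (mul_lt_mul_iff_right₀ hδpos).mp h'
        have hπsum : (π A).toReal + (π Aᶜ).toReal = 1 := by
          rw [← ENNReal.toReal_add (measure_ne_top _ _) (measure_ne_top _ _),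
            measure_add_measure_compl hA, measure_univ]
          simp
        set b := (π A).toReal with hbdef
        have hb : 1/2 ≤ b := by linarith
        set a := (P A).toReal with hadef
        have ha1 : a ≤ 1 := by
          rw [hadef]
          have : P A ≤ 1 := prob_le_one
          exact_mod_cast ENNReal.toReal_mono one_ne_top this
        have hapos : 0 < a := by
          rw [hadef]
          refine ENNReal.toReal_pos (fun hPA0 => ?_) (measure_ne_top _ _)
          have hπA0 : π A = 0 := hac hPA0
          rw [hbdef, hπA0] at hb
          norm_num at hb
        -- measure of the strip
        have hPA : P A ≤ ENNReal.ofReal ((2*δ)^d) := by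
          set B := {z : (Fin d → ℝ) × (Fin d → ℝ) | ∀ i, |z.1 i - z.2 i| ≤ δ} with hBdef
          have hAB : A ⊆ B := by
            intro z hz i
            refine le_trans ?_ hz
            exact Finset.single_le_sum (f := fun i => |z.1 i - z.2 i|)
              (fun j _ => abs_nonneg _) (Finset.mem_univ i)
          have hBm : MeasurableSet B := by
            have : B = ⋂ i, {z : (Fin d → ℝ) × (Fin d → ℝ) | |z.1 i - z.2 i| ≤ δ} := by
              ext z; simp [hBdef, Set.mem_iInter]
            rw [this]
            refine MeasurableSet.iInter fun i => ?_
            exact measurableSet_le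
              ((((continuous_apply i).comp continuous_fst).sub
                ((continuous_apply i).comp continuous_snd)).abs).measurable
              measurable_const
          have hslice : ∀ x : Fin d → ℝ, Prod.mk x ⁻¹' B =
              Set.pi Set.univ fun i => Set.Icc (x i - δ) (x i + δ) := by
            intro x
            ext y
            simp only [Set.mem_preimage, hBdef, Set.mem_setOf_eq, Set.mem_pi, Set.mem_univ,
              forall_true_left, Set.mem_Icc]
            constructor
            · intro hy i
              have := abs_le.mp (hy i)
              constructor <;> linarith [this.1, this.2]
            · intro hy i
              rw [abs_le]
              constructor <;> linarith [(hy i).1, (hy i).2]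
          calc P A ≤ P B := measure_mono hAB
            _ = ∫⁻ x, μ (Prod.mk x ⁻¹' B) ∂μ := Measure.prod_apply hBm
            _ ≤ ∫⁻ _x, ENNReal.ofReal ((2*δ)^d) ∂μ := by
                refine lintegral_mono fun x => ?_
                show μ (Prod.mk x ⁻¹' B) ≤ ENNReal.ofReal ((2*δ)^d)
                rw [hslice x, hμ, Measure.pi_pi]
                have hfac : ∀ i : Fin d,
                    (volume.restrict (Set.Icc (0:ℝ) 1)) (Set.Icc (x i - δ) (x i + δ)) ≤
                      ENNReal.ofReal (2*δ) := by
                  intro i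
                  rw [Measure.restrict_apply measurableSet_Icc]
                  calc volume (Set.Icc (x i - δ) (x i + δ) ∩ Set.Icc 0 1) ≤
                        volume (Set.Icc (x i - δ) (x i + δ)) :=
                      measure_mono Set.inter_subset_left
                    _ = ENNReal.ofReal (2*δ) := by
                      rw [Real.volume_Icc]
                      congr 1
                      ring
                calc ∏ i, (volume.restrict (Set.Icc (0:ℝ) 1)) (Set.Icc (x i - δ) (x i + δ)) ≤
                      ∏ _i : Fin d, ENNReal.ofReal (2*δ) :=
                    Finset.prod_le_prod' fun i _ => hfac i
                  _ = ENNReal.ofReal ((2*δ)^d) := by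
                    rw [Finset.prod_const, ENNReal.ofReal_pow (by positivity)]
                    simp
            _ = ENNReal.ofReal ((2*δ)^d) := by simp [measure_univ]
        have haU : a ≤ (2*δ)^d := by
          have h' := ENNReal.toReal_mono ENNReal.ofReal_ne_top hPA
          rwa [ENNReal.toReal_ofReal (by positivity)] at h'
        -- Jensen
        haveI hNZ : NeZero (P.restrict A) := by
          refine ⟨fun h0 => ?_⟩
          rw [Measure.restrict_eq_zero] at h0
          rw [hadef, h0] at hapos
          simp at hapos
        have hbeq : ∫ z in A, rdv z ∂P = b := Measure.setIntegral_toReal_rnDeriv hac A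
        have hconv : ConvexOn ℝ (Set.Ici 0) f := by
          have h1 : ConvexOn ℝ (Set.Ici 0) fun t : ℝ => (1/ρ) • (t ^ ρ) :=
            (convexOn_rpow hρ.le).smul (by positivity)
          have h2 := h1.add_const (-(1/ρ))
          have heq : f = fun t : ℝ => (1/ρ) • (t ^ ρ) + (-(1/ρ)) := by
            funext t
            simp only [hfdef, smul_eq_mul]
            ring
          rw [heq]
          exact h2
        have hcont : ContinuousOn f (Set.Ici 0) := by
          apply Continuous.continuousOn
          exact ((Real.continuous_rpow_const hρ0.le).sub continuous_const).div_const ρ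
        have hrdvint : Integrable rdv (P.restrict A) :=
          (Measure.integrable_toReal_rnDeriv (μ := π) (ν := P)).restrict
        have hfint : Integrable (f ∘ rdv) (P.restrict A) := hint.restrict
        have hjen := hconv.map_average_le hcont isClosed_Ici
          (ae_of_all _ fun z => ENNReal.toReal_nonneg) hrdvint hfint
        rw [average_eq, average_eq, measureReal_restrict_apply_univ, measureReal_def, ← hadef, hbeq,
          smul_eq_mul, smul_eq_mul] at hjen
        have hjen2 : a * f (a⁻¹ * b) ≤ ∫ z in A, f (rdv z) ∂P := by
          have h' : f (a⁻¹ * b) * a ≤ ∫ z in A, f (rdv z) ∂P :=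
            (le_div_iff₀ hapos).mp (by rw [div_eq_inv_mul]; exact hjen)
          calc a * f (a⁻¹ * b) = f (a⁻¹ * b) * a := by ring
            _ ≤ _ := h'
        -- integral over complement
        have hcompl : -((1/ρ) * (P Aᶜ).toReal) ≤ ∫ z in Aᶜ, f (rdv z) ∂P := by
          have h2 : ∫ z in Aᶜ, (-(1/ρ) : ℝ) ∂P ≤ ∫ z in Aᶜ, f (rdv z) ∂P := by
            apply setIntegral_mono_on integrableOn_const
              hint.integrableOn hA.compl
            intro z _
            exact hfge _ ENNReal.toReal_nonneg
          rw [setIntegral_const, smul_eq_mul, measureReal_def] at h2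
          calc -((1/ρ) * (P Aᶜ).toReal) = (P Aᶜ).toReal * -(1/ρ) := by ring
            _ ≤ _ := h2
        have hPAc1 : (P Aᶜ).toReal ≤ 1 := by
          have : P Aᶜ ≤ 1 := prob_le_one
          exact_mod_cast ENNReal.toReal_mono one_ne_top this
        have hsplit : ∫ z in A, f (rdv z) ∂P + ∫ z in Aᶜ, f (rdv z) ∂P = r :=
          integral_add_compl hA hint
        have hr2 : a * f (a⁻¹ * b) - 1/ρ ≤ r := by
          have h5 : (1/ρ) * (P Aᶜ).toReal ≤ 1/ρ := by
            have := mul_le_mul_of_nonneg_left hPAc1 (by positivity : (0:ℝ) ≤ 1/ρ)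
            simpa using this
          linarith [hjen2, hcompl, hsplit, h5]
        -- numeric estimates
        have hbρ : (2:ℝ) ^ (-ρ) ≤ b ^ ρ := by
          have h1 : ((1:ℝ)/2) ^ ρ ≤ b ^ ρ :=
            Real.rpow_le_rpow (by norm_num) hb hρ0.le
          have h2 : ((1:ℝ)/2) ^ ρ = (2:ℝ) ^ (-ρ) := by
            rw [Real.rpow_neg (by norm_num), ← Real.inv_rpow (by norm_num)]
            norm_num
          linarith [h1, h2.symm.le]
        have haρ : ((2*δ) ^ (d:ℝ)) ^ (1 - ρ) ≤ a ^ (1 - ρ) := by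
          apply Real.rpow_le_rpow_of_nonpos hapos ?_ (by linarith)
          rw [Real.rpow_natCast]
          exact haU
        have hfbA : a * f (a⁻¹ * b) = (b ^ ρ * a ^ (1 - ρ) - a) / ρ := by
          have hab : (a⁻¹ * b) ^ ρ = b ^ ρ * a ^ (-ρ) := by
            rw [Real.mul_rpow (inv_nonneg.mpr hapos.le) (by linarith : (0:ℝ) ≤ b),
              ← Real.rpow_neg_one a, ← Real.rpow_mul hapos.le]
            rw [show (-1) * ρ = -ρ by ring]
            ring
          have ha1ρ : a ^ (1 - ρ) = a * a ^ (-ρ) := by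
            rw [show (1 - ρ) = 1 + (-ρ) by ring, Real.rpow_add hapos, Real.rpow_one]
          simp only [hfdef]
          rw [hab, ha1ρ]
          ring
        have hT : ((2*δ) ^ (d:ℝ)) ^ (1 - ρ) = (2:ℝ) ^ ((d:ℝ)*(1-ρ)) * δ ^ ((d:ℝ)*(1-ρ)) := by
          rw [← Real.rpow_mul (by positivity), Real.mul_rpow (by norm_num) hδpos.le]
        have hQ : (2:ℝ)^(-ρ) * ((2:ℝ) ^ ((d:ℝ)*(1-ρ))) = (2:ℝ) ^ (-ρ - d*(ρ-1)) := by
          rw [← Real.rpow_add (by norm_num)]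
          congr 1
          ring
        have hεδ : ε * δ ^ ((d:ℝ)*(1-ρ)) = δ := by
          have h1 : δ ^ ((d:ℝ)*(1-ρ)) = ε ^ (γ * ((d:ℝ)*(1-ρ))) := by
            rw [hδdef, ← Real.rpow_mul hε0.le]
          have h2 : 1 + γ * ((d:ℝ)*(1-ρ)) = γ := by
            rw [hγdef]
            field_simp
            ring
          calc ε * δ ^ ((d:ℝ)*(1-ρ)) = ε ^ (1:ℝ) * ε ^ (γ * ((d:ℝ)*(1-ρ))) := by
                rw [h1, Real.rpow_one]
            _ = ε ^ (1 + γ * ((d:ℝ)*(1-ρ))) := (Real.rpow_add hε0 _ _).symm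
            _ = δ := by rw [h2, ← hδdef]
        -- combine
        set Q : ℝ := (2:ℝ) ^ (-ρ - d*(ρ-1)) with hQdef
        have hQpos : 0 < Q := Real.rpow_pos_of_pos (by norm_num) _
        have hprod : Q * δ ^ ((d:ℝ)*(1-ρ)) ≤ b ^ ρ * a ^ (1 - ρ) := by
          have h1 : (2:ℝ)^(-ρ) * ((2*δ) ^ (d:ℝ)) ^ (1 - ρ) ≤ b ^ ρ * a ^ (1 - ρ) :=
            mul_le_mul hbρ haρ (Real.rpow_nonneg (Real.rpow_nonneg (by positivity) _) _)
              (Real.rpow_nonneg (by linarith) _)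
          rw [hT, ← mul_assoc, hQ] at h1
          exact h1
        have hr3 : (Q * δ ^ ((d:ℝ)*(1-ρ)) - 2) / ρ ≤ r := by
          rw [hfbA] at hr2
          have h3 : (Q * δ ^ ((d:ℝ)*(1-ρ)) - 2) / ρ ≤ (b ^ ρ * a ^ (1 - ρ) - a - 1) / ρ :=
            (div_le_div_iff_of_pos_right hρ0).mpr (by linarith [hprod, ha1])
          have h4 : (b ^ ρ * a ^ (1 - ρ) - a - 1) / ρ = (b ^ ρ * a ^ (1 - ρ) - a) / ρ - 1/ρ := by
            ring
          linarith [h3, h4, hr2]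
        have hεr : ε * ((Q * δ ^ ((d:ℝ)*(1-ρ)) - 2) / ρ) ≤ ε * r :=
          mul_le_mul_of_nonneg_left hr3 hε0.le
        have hcomp : ε * ((Q * δ ^ ((d:ℝ)*(1-ρ)) - 2) / ρ) = C1 * δ - (2/ρ) * ε := by
          have hC1Q : C1 = Q / ρ := hC1def
          rw [hC1Q]
          calc ε * ((Q * δ ^ ((d:ℝ)*(1-ρ)) - 2) / ρ)
              = (Q * (ε * δ ^ ((d:ℝ)*(1-ρ))) - 2 * ε) / ρ := by ring
            _ = (Q * δ - 2 * ε) / ρ := by rw [hεδ]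
            _ = Q / ρ * δ - (2/ρ) * ε := by ring
        have hfin : K * δ - 2 * ε ≤ C1 * δ - (2/ρ) * ε := by
          have h1 : K * δ ≤ C1 * δ := mul_le_mul_of_nonneg_right hKleC1 hδpos.le
          have h2 : (2/ρ) * ε ≤ 2 * ε := by
            apply mul_le_mul_of_nonneg_right ?_ hε0.le
            rw [div_le_iff₀ hρ0]
            linarith
          linarith
        rw [hcomp] at hεr
        linarith
    · -- infinite case
      have hfd : fDiv f π P = ⊤ := by delta fDiv; exact if_neg h
      show ((K * δ - 2 * ε : ℝ) : EReal) ≤ ((∫ z, c z ∂π : ℝ) : EReal) + (ε : EReal) * fDiv f π P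
      rw [hfd, EReal.coe_mul_top_of_pos hε0, EReal.add_top_of_ne_bot (EReal.coe_ne_bot _)]
      exact le_top
  have h2 : ((K * δ - 2 * ε : ℝ) : EReal) ≤ OTf2 μ μ c f ε := by
    rw [OTf2]
    exact le_sInf key
  refine le_trans ?_ h2
  rw [EReal.coe_le_coe_iff]
  linarith

end
end

section
/- Let μ₁ = μ₂ be the uniform distribution on [0,1]^d ⊂ ℝ^d, let c(x,y) = |x−y|² (squared Euclidean norm), and let f(x) = (x^ρ − 1)/ρ for some ρ > 1. Then there exist constants K > 0 and K' ≥ 0 such that for all ε ∈ (0,1]: OT_{f,ε} − OT ≥ K·ε^{1/((ρ−1)d/2+1)} − K'·ε. -/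
open MeasureTheory ENNReal Filter

noncomputable section

private lemma aux_exponent (d : ℕ) (ρ : ℝ) (hρ : 1 < ρ) :
    1 + (1 / ((ρ - 1) * d / 2 + 1) - 1) * (ρ / (ρ - 1))
      + 1 / ((ρ - 1) * d / 2 + 1) / 2 * d = 1 / ((ρ - 1) * d / 2 + 1) := by
  have hd0 : (0:ℝ) ≤ d := Nat.cast_nonneg d
  have h1 : ρ - 1 ≠ 0 := by linarith
  have key : ∀ x : ℝ, x = (ρ - 1) * d / 2 + 1 →
      1 + (1 / x - 1) * (ρ / (ρ - 1)) + 1 / x / 2 * d = 1 / x := by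
    intro x hx
    have hx0 : x ≠ 0 := by rw [hx]; nlinarith
    field_simp
    linear_combination (-2) * hx
  exact key _ rfl

private lemma aux_const (d : ℕ) (q : ℝ) (hq : 1 < q) :
    ∃ b : ℝ, 0 < b ∧ b ≤ 1 ∧ 2 ^ d * b ^ (2 * q + (d : ℝ)) ≤ q * b ^ 2 / 2 := by
  have hd0 : (0:ℝ) ≤ d := Nat.cast_nonneg d
  have he : 0 < 2 * q + (d : ℝ) - 2 := by linarith
  have hbase : (0:ℝ) < q / 2 ^ (d + 1) := by positivity
  refine ⟨min 1 ((q / 2 ^ (d + 1)) ^ (2 * q + (d : ℝ) - 2)⁻¹),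
    lt_min one_pos (Real.rpow_pos_of_pos hbase _), min_le_left _ _, ?_⟩
  set b := min 1 ((q / 2 ^ (d + 1)) ^ (2 * q + (d : ℝ) - 2)⁻¹) with hbdef
  have hb0 : 0 < b := lt_min one_pos (Real.rpow_pos_of_pos hbase _)
  have hbe : b ^ (2 * q + (d : ℝ) - 2) ≤ q / 2 ^ (d + 1) := by
    calc b ^ (2 * q + (d : ℝ) - 2)
        ≤ ((q / 2 ^ (d + 1)) ^ (2 * q + (d : ℝ) - 2)⁻¹) ^ (2 * q + (d : ℝ) - 2) :=
          Real.rpow_le_rpow hb0.le (min_le_right _ _) he.le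
      _ = q / 2 ^ (d + 1) := Real.rpow_inv_rpow hbase.le he.ne'
  have hsplit : b ^ (2 * q + (d : ℝ)) = b ^ (2 * q + (d : ℝ) - 2) * b ^ 2 := by
    have h2 : 2 * q + (d : ℝ) = (2 * q + (d : ℝ) - 2) + 2 := by ring
    conv_lhs => rw [h2]
    rw [Real.rpow_add hb0, Real.rpow_two]
  calc 2 ^ d * b ^ (2 * q + (d : ℝ)) = 2 ^ d * b ^ (2 * q + (d : ℝ) - 2) * b ^ 2 := by
        rw [hsplit]; ring
    _ ≤ 2 ^ d * (q / 2 ^ (d + 1)) * b ^ 2 := by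
        have h3 : (0:ℝ) ≤ b ^ 2 := sq_nonneg b
        have h4 := mul_le_mul_of_nonneg_left hbe (show (0:ℝ) ≤ 2 ^ d by positivity)
        nlinarith
    _ = q * b ^ 2 / 2 := by
        rw [pow_succ]
        field_simp

set_option maxHeartbeats 2000000 in
/-- Remark 4.3 (sharpness for quadratic cost, `L^ρ` case): for `μ₁ = μ₂` uniform on `[0,1]^d`,
`c(x,y) = |x − y|²` and `f x = (x^ρ − 1)/ρ` with `ρ > 1`, there are `K > 0`, `K' ≥ 0` such
that for all `ε ∈ (0,1]`: `OT_{f,ε} − OT ≥ K ε^{1/((ρ−1)d/2+1)} − K' ε`. -/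
theorem sharpness_quadratic_Lrho
    (d : ℕ) (hd : 0 < d) (ρ : ℝ) (hρ : 1 < ρ)
    (μ : Measure (Fin d → ℝ))
    (hμ : μ = Measure.pi (fun _ : Fin d => volume.restrict (Set.Icc (0 : ℝ) 1)))
    (c : (Fin d → ℝ) × (Fin d → ℝ) → ℝ)
    (hc : ∀ z : (Fin d → ℝ) × (Fin d → ℝ), c z = ∑ i, (z.1 i - z.2 i) ^ 2) :
    ∃ K : ℝ, 0 < K ∧ ∃ K' : ℝ, 0 ≤ K' ∧ ∀ ε : ℝ, ε ∈ Set.Ioc (0 : ℝ) 1 →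
      ((OTcost2 μ μ c + K * ε ^ (1 / ((ρ - 1) * d / 2 + 1)) - K' * ε : ℝ) : EReal) ≤
        OTf2 μ μ c (fun x => (x ^ ρ - 1) / ρ) ε := by
  have hceq : c = fun z => ∑ i, (z.1 i - z.2 i) ^ 2 := funext hc
  subst hceq
  have hd0 : (0:ℝ) < d := by exact_mod_cast hd
  have hρ0 : 0 < ρ - 1 := sub_pos.2 hρ
  haveI hunit : IsProbabilityMeasure (volume.restrict (Set.Icc (0:ℝ) 1)) :=
    ⟨by simp [Measure.restrict_apply_univ, Real.volume_Icc]⟩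
  haveI hμprob : IsProbabilityMeasure μ := by rw [hμ]; infer_instance
  haveI hPprob : IsProbabilityMeasure (μ.prod μ) := by infer_instance
  set B : Set (Fin d → ℝ) := Set.univ.pi fun _ => Set.Icc (0:ℝ) 1 with hBdef
  have hBmeas : MeasurableSet B := MeasurableSet.univ_pi fun _ => measurableSet_Icc
  have hμB : μ Bᶜ = 0 := by
    have h1 : μ B = 1 := by
      rw [hμ, hBdef, Measure.pi_pi]
      simp [Measure.restrict_apply measurableSet_Icc, Real.volume_Icc]
    rw [measure_compl hBmeas (measure_ne_top _ _), measure_univ, h1, tsub_self]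
  have hccont : Continuous fun z : (Fin d → ℝ) × (Fin d → ℝ) => ∑ i, (z.1 i - z.2 i) ^ 2 := by
    fun_prop
  have hOT : OTcost2 μ μ (fun z => ∑ i, (z.1 i - z.2 i) ^ 2) ≤ 0 := by
    have hdiag : Measurable fun x : Fin d → ℝ => (x, x) := measurable_id.prodMk measurable_id
    have hmem : μ.map (fun x => (x, x)) ∈ couplings2 μ μ := by
      refine ⟨Measure.isProbabilityMeasure_map hdiag.aemeasurable, ?_, ?_⟩
      · rw [Measure.map_map measurable_fst hdiag]
        simp [Function.comp_def]
      · rw [Measure.map_map measurable_snd hdiag]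
        simp [Function.comp_def]
    have hval : (∫ z, (∑ i, (z.1 i - z.2 i) ^ 2) ∂(μ.map fun x => (x, x))) = 0 := by
      rw [integral_map hdiag.aemeasurable hccont.aestronglyMeasurable]
      simp
    have h0 : (0:ℝ) ∈ (fun π : Measure ((Fin d → ℝ) × (Fin d → ℝ)) =>
        ∫ z, (∑ i, (z.1 i - z.2 i) ^ 2) ∂π) '' couplings2 μ μ := ⟨_, hmem, hval⟩
    refine csInf_le ⟨0, ?_⟩ h0
    rintro v ⟨π, hπ, rfl⟩
    exact integral_nonneg fun z => by positivity
  have hconj : ρ.HolderConjugate (ρ / (ρ - 1)) := Real.HolderConjugate.conjExponent hρ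
  set q : ℝ := ρ / (ρ - 1) with hqdef
  have hq1 : 1 < q := (Real.HolderConjugate.symm hconj).lt
  have hq0 : 0 < q := lt_trans one_pos hq1
  obtain ⟨b, hb0, hb1, hbkey⟩ := aux_const d q hq1
  refine ⟨b ^ 2 / 2, by positivity, 1 / ρ, by positivity, ?_⟩
  rintro ε ⟨hε0, hε1⟩
  set α : ℝ := 1 / ((ρ - 1) * (d:ℝ) / 2 + 1) with hαdef
  have hden : 0 < (ρ - 1) * (d:ℝ) / 2 + 1 := by positivity
  have hα0 : 0 < α := by positivity
  set δ : ℝ := b * ε ^ (α / 2) with hδdef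
  have hεh : 0 < ε ^ (α / 2) := Real.rpow_pos_of_pos hε0 _
  have hδ0 : 0 < δ := by positivity
  set a : ℝ := b ^ 2 * ε ^ (α - 1) with hadef
  have hεam : 0 < ε ^ (α - 1) := Real.rpow_pos_of_pos hε0 _
  have ha0 : 0 < a := by positivity
  have hεpow : 0 < ε ^ α := Real.rpow_pos_of_pos hε0 _
  have hεa : ε * a = b ^ 2 * ε ^ α := by
    have h : ε * ε ^ (α - 1) = ε ^ α := by
      conv_rhs => rw [show α = 1 + (α - 1) from by ring, Real.rpow_add hε0, Real.rpow_one]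
    rw [hadef, ← mul_assoc, mul_comm ε (b ^ 2), mul_assoc, h]
  have hδsq : δ ^ 2 = b ^ 2 * ε ^ α := by
    rw [hδdef, mul_pow, sq (ε ^ (α / 2)), ← Real.rpow_add hε0,
      show α / 2 + α / 2 = α from by ring]
  have hmain : ε * a ^ q * (2 * δ) ^ d / q ≤ b ^ 2 / 2 * ε ^ α := by
    have h1 : a ^ q = b ^ (2 * q) * ε ^ ((α - 1) * q) := by
      rw [hadef, Real.mul_rpow (by positivity) hεam.le, ← Real.rpow_two,
        ← Real.rpow_mul hb0.le, ← Real.rpow_mul hε0.le]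
    have h3 : (2 * δ) ^ d = 2 ^ d * (b ^ ((d : ℝ)) * ε ^ (α / 2 * (d : ℝ))) := by
      rw [hδdef, Real.rpow_natCast b d, Real.rpow_mul hε0.le, Real.rpow_natCast _ d]
      ring
    have h4 : b ^ (2 * q) * b ^ ((d : ℝ)) = b ^ (2 * q + (d : ℝ)) :=
      (Real.rpow_add hb0 _ _).symm
    have h5 : ε ^ (1 + (α - 1) * q + α / 2 * (d : ℝ))
        = ε * ε ^ ((α - 1) * q) * ε ^ (α / 2 * (d : ℝ)) := by
      rw [Real.rpow_add hε0, Real.rpow_add hε0, Real.rpow_one]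
    have h6 : 1 + (α - 1) * q + α / 2 * (d : ℝ) = α := by
      rw [hαdef, hqdef]; exact aux_exponent d ρ hρ
    calc ε * a ^ q * (2 * δ) ^ d / q
        = (2 ^ d * (b ^ (2 * q) * b ^ ((d : ℝ))))
            * (ε * ε ^ ((α - 1) * q) * ε ^ (α / 2 * (d : ℝ))) / q := by
          rw [h1, h3]; ring
      _ = (2 ^ d * b ^ (2 * q + (d : ℝ))) * ε ^ α / q := by rw [h4, ← h5, h6]
      _ ≤ (q * b ^ 2 / 2) * ε ^ α / q := by gcongr
      _ = b ^ 2 / 2 * ε ^ α := by field_simp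
  rw [OTf2]
  refine le_sInf ?_
  rintro v ⟨π, hπmem, rfl⟩
  obtain ⟨hπprob, hπ1, hπ2⟩ := hπmem
  haveI := hπprob
  simp only [fDiv]
  split_ifs with hreg
  swap
  · rw [EReal.coe_mul_top_of_pos hε0, EReal.coe_add_top]; exact le_top
  obtain ⟨hac, hint⟩ := hreg
  rw [← EReal.coe_mul, ← EReal.coe_add, EReal.coe_le_coe_iff]
  set g : (Fin d → ℝ) × (Fin d → ℝ) → ℝ := fun z => (π.rnDeriv (μ.prod μ) z).toReal with hgdef
  set S : Set ((Fin d → ℝ) × (Fin d → ℝ)) :=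
    {z | (∑ i, (z.1 i - z.2 i) ^ 2) < δ ^ 2} with hSdef
  have hSmeas : MeasurableSet S := measurableSet_lt hccont.measurable measurable_const
  set s : ℝ := (π S).toReal with hsdef
  set t : ℝ := ((μ.prod μ) S).toReal with htdef
  have hπBB : π ((B ×ˢ B)ᶜ) = 0 := by
    have hsub : (B ×ˢ B)ᶜ ⊆ (Prod.fst ⁻¹' Bᶜ) ∪ (Prod.snd ⁻¹' Bᶜ) := by
      intro z hz
      simp only [Set.mem_compl_iff, Set.mem_prod, not_and_or] at hz
      rcases hz with h | h
      · exact Or.inl h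
      · exact Or.inr h
    refine measure_mono_null hsub (measure_union_null ?_ ?_)
    · rw [← Measure.map_apply measurable_fst hBmeas.compl, hπ1]; exact hμB
    · rw [← Measure.map_apply measurable_snd hBmeas.compl, hπ2]; exact hμB
  have hzBB : ∀ᵐ z ∂π, z ∈ B ×ˢ B := by
    rw [ae_iff]
    convert hπBB using 2
    rfl
  have hcint : Integrable (fun z : (Fin d → ℝ) × (Fin d → ℝ) =>
      ∑ i, (z.1 i - z.2 i) ^ 2) π := by
    refine Integrable.mono' (integrable_const (d:ℝ)) hccont.aestronglyMeasurable ?_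
    filter_upwards [hzBB] with z hz
    obtain ⟨hz1, hz2⟩ := hz
    rw [Real.norm_eq_abs, abs_of_nonneg (by positivity)]
    calc ∑ i, (z.1 i - z.2 i) ^ 2 ≤ ∑ _i : Fin d, (1:ℝ) := by
          refine Finset.sum_le_sum fun i _ => ?_
          obtain ⟨b1, b2⟩ := hz1 i (Set.mem_univ i)
          obtain ⟨b3, b4⟩ := hz2 i (Set.mem_univ i)
          nlinarith
      _ = (d:ℝ) := by simp
  have hA : δ ^ 2 * (π Sᶜ).toReal ≤ ∫ z, (∑ i, (z.1 i - z.2 i) ^ 2) ∂π := by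
    have hptw : ∀ z, Sᶜ.indicator (fun _ => δ ^ 2) z ≤ ∑ i, (z.1 i - z.2 i) ^ 2 := by
      intro z
      by_cases hz : z ∈ Sᶜ
      · rw [Set.indicator_of_mem hz]
        exact not_lt.mp hz
      · rw [Set.indicator_of_notMem hz]
        positivity
    calc δ ^ 2 * (π Sᶜ).toReal = ∫ z, Sᶜ.indicator (fun _ => δ ^ 2) z ∂π := by
          rw [integral_indicator_const _ hSmeas.compl, smul_eq_mul, measureReal_def]; ring
      _ ≤ _ := integral_mono ((integrable_const _).indicator hSmeas.compl) hcint hptw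
  have hscompl : (π Sᶜ).toReal = 1 - s := by
    rw [hsdef, measure_compl hSmeas (measure_ne_top _ _), measure_univ,
      ENNReal.toReal_sub_of_le prob_le_one one_ne_top, ENNReal.toReal_one]
  have hgint : Integrable g (μ.prod μ) := Measure.integrable_toReal_rnDeriv
  have hsg : ∫ z in S, g z ∂(μ.prod μ) = s := by
    rw [hgdef, hsdef,
      integral_toReal ((Measure.measurable_rnDeriv π (μ.prod μ)).aemeasurable.restrict)
        (ae_restrict_of_ae (Measure.rnDeriv_lt_top π (μ.prod μ))),
      Measure.setLIntegral_rnDeriv hac]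
  have hFint : Integrable (fun z => a * g z - a ^ q / q) (μ.prod μ) :=
    (hgint.const_mul a).sub (integrable_const _)
  have hlint : Integrable
      (fun z => S.indicator (fun z => a * g z - a ^ q / q) z - 1 / ρ) (μ.prod μ) :=
    (hFint.indicator hSmeas).sub (integrable_const _)
  have hconj' : ρ.HolderConjugate q := hconj
  have hI : a * s - a ^ q / q * t - 1 / ρ ≤
      ∫ z, ((g z) ^ ρ - 1) / ρ ∂(μ.prod μ) := by
    have hptw : ∀ z, S.indicator (fun z => a * g z - a ^ q / q) z - 1 / ρ
        ≤ ((g z) ^ ρ - 1) / ρ := by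
      intro z
      have hg0 : 0 ≤ g z := ENNReal.toReal_nonneg
      have hdiv : ((g z) ^ ρ - 1) / ρ = (g z) ^ ρ / ρ - 1 / ρ := by ring
      by_cases hz : z ∈ S
      · rw [Set.indicator_of_mem hz, hdiv]
        have hy := Real.young_inequality_of_nonneg hg0 ha0.le hconj'
        linarith [hy, mul_comm (g z) a]
      · rw [Set.indicator_of_notMem hz, hdiv]
        have h0 : 0 ≤ (g z) ^ ρ / ρ :=
          div_nonneg (Real.rpow_nonneg hg0 ρ) (by linarith)
        linarith
    have hIlow : ∫ z, (S.indicator (fun z => a * g z - a ^ q / q) z - 1 / ρ) ∂(μ.prod μ)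
        = a * s - a ^ q / q * t - 1 / ρ := by
      rw [integral_sub (hFint.indicator hSmeas) (integrable_const _),
        integral_indicator hSmeas,
        integral_sub ((hgint.const_mul a).restrict) (integrable_const _),
        integral_const_mul, hsg, integral_const, integral_const,
        measureReal_restrict_apply_univ, measureReal_def, measureReal_def, measure_univ]
      simp only [smul_eq_mul, ENNReal.toReal_one, one_mul, htdef]
      ring
    exact hIlow ▸ integral_mono hlint hint hptw
  have ht : t ≤ (2 * δ) ^ d := by
    set T : Set ((Fin d → ℝ) × (Fin d → ℝ)) :=
      {z | ∀ i, z.2 i ∈ Set.Ioo (z.1 i - δ) (z.1 i + δ)} with hTdef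
    have hST : S ⊆ T := by
      intro z hz i
      have h1 : (z.1 i - z.2 i) ^ 2 < δ ^ 2 :=
        lt_of_le_of_lt (Finset.single_le_sum
          (fun j _ => sq_nonneg (z.1 j - z.2 j)) (Finset.mem_univ i)) hz
      constructor <;> nlinarith
    have hTmeas : MeasurableSet T := by
      rw [hTdef, Set.setOf_forall]
      refine MeasurableSet.iInter fun i => ?_
      have m1 : Measurable fun z : (Fin d → ℝ) × (Fin d → ℝ) => z.1 i :=
        (measurable_pi_apply i).comp measurable_fst
      have m2 : Measurable fun z : (Fin d → ℝ) × (Fin d → ℝ) => z.2 i :=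
        (measurable_pi_apply i).comp measurable_snd
      exact (measurableSet_lt (m1.sub measurable_const) m2).inter
        (measurableSet_lt m2 (m1.add measurable_const))
    have hslice : ∀ x : Fin d → ℝ,
        μ (Prod.mk x ⁻¹' T) ≤ ENNReal.ofReal (2 * δ) ^ d := by
      intro x
      have hpre : Prod.mk x ⁻¹' T = Set.univ.pi fun i => Set.Ioo (x i - δ) (x i + δ) := by
        ext y
        simp [hTdef, Set.mem_pi]
      rw [hpre, hμ, Measure.pi_pi]
      calc ∏ i, (volume.restrict (Set.Icc (0:ℝ) 1)) (Set.Ioo (x i - δ) (x i + δ))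
          ≤ ∏ _i : Fin d, ENNReal.ofReal (2 * δ) := by
            refine Finset.prod_le_prod' fun i _ => ?_
            calc (volume.restrict (Set.Icc (0:ℝ) 1)) (Set.Ioo (x i - δ) (x i + δ))
                ≤ volume (Set.Ioo (x i - δ) (x i + δ)) := Measure.restrict_apply_le _ _
              _ = ENNReal.ofReal (2 * δ) := by rw [Real.volume_Ioo]; ring_nf
        _ = ENNReal.ofReal (2 * δ) ^ d := by
            simp [Finset.prod_const, Finset.card_univ]
    have hPT : (μ.prod μ) S ≤ ENNReal.ofReal (2 * δ) ^ d := by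
      calc (μ.prod μ) S ≤ (μ.prod μ) T := measure_mono hST
        _ = ∫⁻ x, μ (Prod.mk x ⁻¹' T) ∂μ := Measure.prod_apply hTmeas
        _ ≤ ∫⁻ _, ENNReal.ofReal (2 * δ) ^ d ∂μ := lintegral_mono fun x => hslice x
        _ = ENNReal.ofReal (2 * δ) ^ d := by rw [lintegral_const, measure_univ, mul_one]
    rw [htdef]
    calc ((μ.prod μ) S).toReal ≤ (ENNReal.ofReal (2 * δ) ^ d).toReal :=
          ENNReal.toReal_mono (ENNReal.pow_ne_top ENNReal.ofReal_ne_top) hPT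
      _ = (2 * δ) ^ d := by
          rw [ENNReal.toReal_pow, ENNReal.toReal_ofReal (by positivity)]
  have hfinal : b ^ 2 / 2 * ε ^ α - 1 / ρ * ε ≤
      ∫ z, (∑ i, (z.1 i - z.2 i) ^ 2) ∂π + ε * ∫ z, ((g z) ^ ρ - 1) / ρ ∂(μ.prod μ) := by
    have hc1 : ε * (a * s - a ^ q / q * t - 1 / ρ)
        ≤ ε * ∫ z, ((g z) ^ ρ - 1) / ρ ∂(μ.prod μ) :=
      mul_le_mul_of_nonneg_left hI hε0.le
    have hc2 : δ ^ 2 * (1 - s) ≤ ∫ z, (∑ i, (z.1 i - z.2 i) ^ 2) ∂π := hscompl ▸ hA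
    have hc3 : ε * (a ^ q / q) * t ≤ ε * a ^ q * (2 * δ) ^ d / q := by
      calc ε * (a ^ q / q) * t ≤ ε * (a ^ q / q) * ((2 * δ) ^ d) :=
            mul_le_mul_of_nonneg_left ht (by positivity)
        _ = ε * a ^ q * (2 * δ) ^ d / q := by ring
    calc b ^ 2 / 2 * ε ^ α - 1 / ρ * ε
        ≤ b ^ 2 * ε ^ α - ε * a ^ q * (2 * δ) ^ d / q - ε * (1 / ρ) := by linarith [hmain]
      _ ≤ b ^ 2 * ε ^ α - ε * (a ^ q / q) * t - ε * (1 / ρ) := by linarith [hc3]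
      _ = δ ^ 2 * (1 - s) + ε * (a * s - a ^ q / q * t - 1 / ρ) := by
          linear_combination (s - 1) * hδsq - s * hεa
      _ ≤ _ := add_le_add hc2 hc1
  linarith [hOT, hfinal]


end
end
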